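/- arXiv:1605.04205 — 4 statements merged into one kernel-verified Lean document; each statement's English description precedes it below -/
import Mathlib

section
/- Let p and q be primes with q dividing p - 1. Suppose a non-trivial finite q-group Q acts by automorphisms on a non-trivial finite p-group P. Then there exists an element x of P of order p such that the stabilizer in Q of the subgroup generated by x is non-trivial. -/
open Pointwise

open Polynomial in
private lemma eigen_aux (p q : ℕ) (hp : p.Prime) (hq : q.Prime) (hqp : q ∣ p - 1)
    (M : Type*) [CommGroup M] [Finite M] [Nontrivial M]
    (hM : ∀ x : M, x ^ p = 1)
    (φ : M ≃* M) (hφ : ∀ x : M, φ^[q] x = x) :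
    ∃ (x : M) (k : ℕ), x ≠ 1 ∧ ¬ p ∣ k ∧ φ x = x ^ k := by
  haveI : Fact p.Prime := ⟨hp⟩
  haveI : Fact q.Prime := ⟨hq⟩
  letI : Module (ZMod p) (Additive M) := AddCommGroup.zmodModule (n := p) (fun x => hM x)
  let T : Module.End (ZMod p) (Additive M) :=
    AddMonoidHom.toZModLinearMap p (MulEquiv.toAdditive φ).toAddMonoidHom
  have hTq : T ^ q = 1 := by
    ext v
    rw [Module.End.pow_apply]
    exact hφ v
  have haev : Polynomial.aeval T ((X : (ZMod p)[X]) ^ q - 1) = 0 := by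
    simp [map_sub, map_pow, hTq]
  have hdvd : minpoly (ZMod p) T ∣ (X : (ZMod p)[X]) ^ q - 1 := minpoly.dvd _ _ haev
  -- X^q - 1 splits over ZMod p
  obtain ⟨u, hu⟩ := exists_prime_orderOf_dvd_card (G := (ZMod p)ˣ) q
    (by rw [ZMod.card_units]; exact hqp)
  have hprim : IsPrimitiveRoot ((u : ZMod p)) q := by
    have := IsPrimitiveRoot.orderOf (u : ZMod p)
    rwa [orderOf_units, hu] at this
  have hsplits : Splits ((X : (ZMod p)[X]) ^ q - 1) := by
    have := X_pow_sub_one_splits hprim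
    simpa using this
  have hne : ((X : (ZMod p)[X]) ^ q - 1) ≠ 0 := by
    have := X_pow_sub_C_ne_zero hq.pos (1 : ZMod p)
    simpa using this
  have hmsplits : Splits (minpoly (ZMod p) T) :=
    hsplits.of_dvd hne hdvd
  have hint : IsIntegral (ZMod p) T := Algebra.IsIntegral.isIntegral T
  have hdeg : (minpoly (ZMod p) T).degree ≠ 0 := (minpoly.degree_pos hint).ne'
  obtain ⟨μ, hμroot⟩ := hmsplits.exists_eval_eq_zero hdeg
  have heig : T.HasEigenvalue μ := Module.End.hasEigenvalue_of_isRoot (by simpa using hμroot)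
  obtain ⟨v, hv⟩ := heig.exists_hasEigenvector
  have hμq : μ ^ q = 1 := by
    have : ((X : (ZMod p)[X]) ^ q - 1).eval μ = 0 := by
      obtain ⟨c, hc⟩ := hdvd
      have : (minpoly (ZMod p) T).eval μ = 0 := by simpa using hμroot
      rw [hc, eval_mul, this, zero_mul]
    simpa [sub_eq_zero] using this
  have hμ0 : μ ≠ 0 := by
    intro h
    rw [h, zero_pow hq.ne_zero] at hμq
    exact zero_ne_one hμq
  refine ⟨Additive.toMul v, μ.val, ?_, ?_, ?_⟩
  · intro h
    exact hv.right (by simpa using h)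
  · intro h
    apply hμ0
    have : ((μ.val : ℕ) : ZMod p) = 0 := (ZMod.natCast_eq_zero_iff _ _).mpr h
    rwa [ZMod.natCast_val, ZMod.cast_id] at this
  · have h1 : T v = μ • v := hv.apply_eq_smul
    have h2 : μ • v = μ.val • v := by
      conv_lhs => rw [← ZMod.natCast_zmod_val μ]
      rw [Nat.cast_smul_eq_nsmul]
    have : T v = μ.val • v := h1.trans h2
    exact this

/-- Let `p` and `q` be primes with `q ∣ p - 1`. If a non-trivial finite `q`-group `Q`
acts by automorphisms on a non-trivial finite `p`-group `P`, then there is `x ∈ P` of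
order `p` whose generated subgroup has non-trivial (setwise) stabilizer in `Q`. -/
theorem defect_stmt_0 (p q : ℕ) (hp : p.Prime) (hq : q.Prime) (hqp : q ∣ p - 1)
    (Q P : Type*) [Group Q] [Group P] [Finite Q] [Finite P] [MulDistribMulAction Q P]
    (hQ : IsPGroup q Q) (hP : IsPGroup p P) (hQnt : Nontrivial Q) (hPnt : Nontrivial P) :
    ∃ x : P, orderOf x = p ∧ MulAction.stabilizer Q (Subgroup.zpowers x) ≠ ⊥ := by
  classical
  haveI : Fact p.Prime := ⟨hp⟩
  haveI : Fact q.Prime := ⟨hq⟩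
  haveI : Fintype Q := Fintype.ofFinite Q
  -- an element g of order q in Q
  obtain ⟨n, hn⟩ := (IsPGroup.iff_card (p := q) (G := Q)).mp hQ
  rw [Nat.card_eq_fintype_card] at hn
  have hn0 : n ≠ 0 := by
    intro h
    rw [h, pow_zero] at hn
    exact (Fintype.one_lt_card (α := Q)).ne' hn
  obtain ⟨g, hg⟩ := exists_prime_orderOf_dvd_card (G := Q) q
    (by rw [hn]; exact dvd_pow_self q hn0)
  have hg1 : g ≠ 1 := by
    intro h
    rw [h, orderOf_one] at hg
    exact hq.one_lt.ne' hg.symm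
  -- an element z of order p in the center of P
  haveI : Nontrivial (Subgroup.center P) := hP.center_nontrivial
  haveI : Fintype (Subgroup.center P) := Fintype.ofFinite _
  obtain ⟨m, hm⟩ := (IsPGroup.iff_card (p := p) (G := Subgroup.center P)).mp
    (hP.to_subgroup (Subgroup.center P))
  rw [Nat.card_eq_fintype_card] at hm
  have hm0 : m ≠ 0 := by
    intro h
    rw [h, pow_zero] at hm
    exact (Fintype.one_lt_card (α := Subgroup.center P)).ne' hm
  obtain ⟨z, hz⟩ := exists_prime_orderOf_dvd_card (G := Subgroup.center P) p
    (by rw [hm]; exact dvd_pow_self p hm0)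
  -- the subgroup V = Ω₁(Z(P))
  let V : Subgroup P :=
    { carrier := {x | x ∈ Subgroup.center P ∧ x ^ p = 1}
      one_mem' := ⟨Subgroup.one_mem _, one_pow p⟩
      mul_mem' := by
        rintro a b ⟨ha, hap⟩ ⟨hb, hbp⟩
        refine ⟨Subgroup.mul_mem _ ha hb, ?_⟩
        have hc : Commute a b := (Subgroup.mem_center_iff.mp ha b).symm
        rw [hc.mul_pow, hap, hbp, one_mul]
      inv_mem' := by
        rintro a ⟨ha, hap⟩
        exact ⟨Subgroup.inv_mem _ ha, by rw [inv_pow, hap, inv_one]⟩ }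
  have hVmem : ∀ x : P, x ∈ V ↔ x ∈ Subgroup.center P ∧ x ^ p = 1 := fun x => Iff.rfl
  -- V is Q-invariant
  have hsmulV : ∀ (a : Q) (x : P), x ∈ V → a • x ∈ V := by
    rintro a x ⟨hx, hxp⟩
    refine ⟨Subgroup.mem_center_iff.mpr fun y => ?_, by rw [← smul_pow', hxp, smul_one]⟩
    have := Subgroup.mem_center_iff.mp hx (a⁻¹ • y)
    calc y * a • x = a • ((a⁻¹ • y) * x) := by rw [smul_mul', smul_inv_smul]
      _ = a • (x * (a⁻¹ • y)) := by rw [← this]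
      _ = a • x * y := by rw [smul_mul', smul_inv_smul]
  haveI : IsMulCommutative V :=
    ⟨⟨fun a b => Subtype.ext ((Subgroup.mem_center_iff.mp a.2.1 b.1).symm)⟩⟩
  haveI : Nontrivial V := by
    refine ⟨⟨⟨(z : P), (z : Subgroup.center P).2, ?_⟩, 1, ?_⟩⟩
    · have := pow_orderOf_eq_one z
      rw [hz] at this
      exact_mod_cast congrArg (Subtype.val) this
    · intro h
      have hz1 : (z : P) = 1 := congrArg Subtype.val h
      have : z = 1 := Subtype.ext hz1
      rw [this, orderOf_one] at hz
      exact hp.one_lt.ne' hz.symm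
  have hVexp : ∀ x : V, x ^ p = 1 := fun x => Subtype.ext (by
    rw [SubgroupClass.coe_pow]
    exact x.2.2)
  -- the automorphism of V induced by g
  let φ : V ≃* V :=
    { toFun := fun x => ⟨g • (x : P), hsmulV g _ x.2⟩
      invFun := fun x => ⟨g⁻¹ • (x : P), hsmulV g⁻¹ _ x.2⟩
      left_inv := fun x => Subtype.ext (inv_smul_smul g (x : P))
      right_inv := fun x => Subtype.ext (smul_inv_smul g (x : P))
      map_mul' := fun x y => Subtype.ext (smul_mul' g (x : P) (y : P)) }
  have hφiter : ∀ (k : ℕ) (x : V), ((φ^[k] x : V) : P) = g ^ k • (x : P) := by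
    intro k
    induction k with
    | zero => intro x; simp
    | succ k ih =>
      intro x
      rw [Function.iterate_succ_apply', pow_succ', mul_smul]
      show g • ((φ^[k] x : V) : P) = g • (g ^ k • (x : P))
      rw [ih]
  have hφq : ∀ x : V, φ^[q] x = x := by
    intro x
    apply Subtype.ext
    rw [hφiter q x, ← hg, pow_orderOf_eq_one, one_smul]
  open IsMulCommutative in
  obtain ⟨x, k, hx1, hkp, hφx⟩ := eigen_aux p q hp hq hqp V hVexp φ hφq
  refine ⟨(x : P), ?_, ?_⟩
  · exact orderOf_eq_prime x.2.2 (fun h => hx1 (Subtype.ext h))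
  · have hordx : orderOf (x : P) = p := orderOf_eq_prime x.2.2 (fun h => hx1 (Subtype.ext h))
    have hgx : g • (x : P) = (x : P) ^ k := by
      have := congrArg (Subtype.val) hφx
      rw [SubgroupClass.coe_pow] at this
      exact this
    have hzp : Subgroup.zpowers ((x : P) ^ k) = Subgroup.zpowers (x : P) := by
      apply le_antisymm
      · rw [Subgroup.zpowers_le]
        exact Subgroup.pow_mem _ (Subgroup.mem_zpowers _) k
      · rw [Subgroup.zpowers_le]
        have hcop : Nat.Coprime k p := (Nat.coprime_comm.mp ((hp.coprime_iff_not_dvd).mpr hkp))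
        obtain ⟨l, -, hl⟩ := Nat.exists_mul_mod_eq_one_of_coprime hcop hp.one_lt
        have : ((x : P) ^ k) ^ l = (x : P) := by
          rw [← pow_mul, ← pow_mod_orderOf, hordx, hl, pow_one]
        exact Subgroup.mem_zpowers_iff.mpr ⟨(l : ℤ), by rw [zpow_natCast]; exact this⟩
    have hgmem : g ∈ MulAction.stabilizer Q (Subgroup.zpowers (x : P)) := by
      show g • Subgroup.zpowers (x : P) = Subgroup.zpowers (x : P)
      rw [Subgroup.pointwise_smul_def]
      erw [MonoidHom.map_zpowers]
      show Subgroup.zpowers (g • (x : P)) = _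
      rw [hgx, hzp]
    intro hbot
    rw [hbot] at hgmem
    exact hg1 (Subgroup.mem_bot.mp hgmem)
end

section
/- Let p and q be primes with q dividing p - 1, let G be a finite group, and suppose that for every subgroup U of G of order p, q does not divide the order of the normalizer N_G(U). Then for every non-trivial p-subgroup R of G, q does not divide the order of N_G(R). -/
open Polynomial in
lemma aux_eigen (p q : ℕ) [Fact p.Prime] (hq : q.Prime) (hqp : q ∣ p - 1)
    (A : Type*) [AddCommGroup A] [Module (ZMod p) A] [Nontrivial A]
    (f : Module.End (ZMod p) A) (hf : f ^ q = 1) :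
    ∃ (v : A) (c : ZMod p), v ≠ 0 ∧ c ≠ 0 ∧ f v = c • v := by
  have hqfact : Fact q.Prime := ⟨hq⟩
  obtain ⟨u, hu⟩ := exists_prime_orderOf_dvd_card (G := (ZMod p)ˣ) q
    (by rwa [ZMod.card_units])
  have horder : orderOf (u : ZMod p) = q := by rw [orderOf_units, hu]
  have hprim : IsPrimitiveRoot (u : ZMod p) q :=
    ⟨by rw [← horder]; exact pow_orderOf_eq_one _,
     fun l hl => horder ▸ orderOf_dvd_of_pow_eq_one hl⟩
  have hfact := Polynomial.X_pow_sub_one_eq_prod hq.pos hprim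
  have h0 : Polynomial.aeval f
      (∏ μ ∈ nthRootsFinset q (1 : ZMod p), (X - C μ)) = 0 := by
    rw [← hfact]
    simp only [map_sub, map_pow, Polynomial.aeval_X, map_one]
    rw [hf, sub_self]
  have hnoninj : ∃ μ ∈ nthRootsFinset q (1 : ZMod p),
      ¬ Function.Injective ⇑(f - algebraMap (ZMod p) (Module.End (ZMod p) A) μ) := by
    by_contra hc
    push_neg at hc
    have hinj : Function.Injective
        ⇑(Polynomial.aeval f (∏ μ ∈ nthRootsFinset q (1 : ZMod p), (X - C μ))) := by
      refine Finset.prod_induction _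
        (fun P => Function.Injective ⇑(Polynomial.aeval f P))
        (fun a b ha hb => ?_) (by simpa [Module.End.coe_one] using Function.injective_id)
        (fun x hx => ?_)
      · show Function.Injective ⇑(Polynomial.aeval f (a * b))
        rw [map_mul, Module.End.mul_eq_comp, LinearMap.coe_comp]
        exact ha.comp hb
      · have : Polynomial.aeval f (X - C x) =
            f - algebraMap (ZMod p) (Module.End (ZMod p) A) x := by
          simp [map_sub]
        show Function.Injective ⇑(Polynomial.aeval f (X - C x))
        rw [this]
        exact hc x hx
    obtain ⟨v, hv⟩ := exists_ne (0 : A)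
    apply hv
    apply hinj
    rw [h0]
    simp
  obtain ⟨μ, hμS, hμ⟩ := hnoninj
  rw [Function.not_injective_iff] at hμ
  obtain ⟨a, b, hab, hne⟩ := hμ
  refine ⟨a - b, μ, sub_ne_zero_of_ne hne, ?_, ?_⟩
  · intro h0'
    have := (Polynomial.mem_nthRootsFinset hq.pos (1 : ZMod p)).mp hμS
    rw [h0'] at this
    simp [zero_pow hq.ne_zero] at this
  · have h1 : (f - algebraMap (ZMod p) (Module.End (ZMod p) A) μ) (a - b) = 0 := by
      rw [map_sub, hab, sub_self]
    rw [LinearMap.sub_apply, Module.algebraMap_end_apply, sub_eq_zero] at h1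
    exact h1

/-- If `q ∣ p - 1` and no subgroup of order `p` of the finite group `G` has normalizer
of order divisible by `q`, then no non-trivial `p`-subgroup of `G` has normalizer of
order divisible by `q`. -/
theorem defect_stmt_1 (p q : ℕ) (hp : p.Prime) (hq : q.Prime) (hqp : q ∣ p - 1)
    (G : Type*) [Group G] [Finite G]
    (h : ∀ U : Subgroup G, Nat.card U = p → ¬ q ∣ Nat.card (Subgroup.normalizer (U : Set G))) :
    ∀ R : Subgroup G, IsPGroup p R → R ≠ ⊥ → ¬ q ∣ Nat.card (Subgroup.normalizer (R : Set G)) := by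
  intro R hR hRbot hQ
  haveI : Fact p.Prime := ⟨hp⟩
  haveI : Fact q.Prime := ⟨hq⟩
  haveI : Fintype G := Fintype.ofFinite G
  haveI : Fintype (Subgroup.normalizer (R : Set G)) := Fintype.ofFinite _
  -- an element g of order q in the normalizer of R
  obtain ⟨g', hg'⟩ := exists_prime_orderOf_dvd_card (G := Subgroup.normalizer (R : Set G)) q
    (by rwa [← Nat.card_eq_fintype_card])
  set g : G := (g' : G) with hgdef
  have hgord : orderOf g = q := by rw [Subgroup.orderOf_coe, hg']
  have hgR : ∀ r : G, r ∈ R ↔ g * r * g⁻¹ ∈ R := Subgroup.mem_normalizer_iff.mp g'.2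
  -- the "center" Z of R inside G
  set Z : Subgroup G := Subgroup.centralizer (R : Set G) ⊓ R with hZdef
  have hZR : Z ≤ R := inf_le_right
  have hZcomm : ∀ x ∈ Z, ∀ r ∈ R, r * x = x * r := by
    intro x hx r hr
    exact Subgroup.mem_centralizer_iff.mp hx.1 r hr
  have hZg : ∀ x ∈ Z, g * x * g⁻¹ ∈ Z := by
    intro x hx
    refine ⟨Subgroup.mem_centralizer_iff.mpr fun r hr => ?_, (hgR x).mp hx.2⟩
    have hr' : g⁻¹ * r * g ∈ R := (hgR (g⁻¹ * r * g)).mpr (by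
      have : g * (g⁻¹ * r * g) * g⁻¹ = r := by group
      rwa [this])
    have hc := hZcomm x hx (g⁻¹ * r * g) hr'
    calc r * (g * x * g⁻¹) = g * ((g⁻¹ * r * g) * x) * g⁻¹ := by group
      _ = g * (x * (g⁻¹ * r * g)) * g⁻¹ := by rw [hc]
      _ = (g * x * g⁻¹) * r := by group
  -- a nontrivial element of Z
  haveI : Nontrivial R := (Subgroup.nontrivial_iff_ne_bot R).mpr hRbot
  haveI hcnt : Nontrivial (Subgroup.center R) := hR.center_nontrivial
  obtain ⟨c₀, hc₀⟩ := exists_ne (1 : Subgroup.center R)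
  have hzZ : ((c₀ : R) : G) ∈ Z := by
    refine ⟨Subgroup.mem_centralizer_iff.mpr fun r hr => ?_, ((c₀ : R)).2⟩
    have := (Subgroup.mem_center_iff.mp c₀.2) ⟨r, hr⟩
    exact congrArg Subtype.val this
  have hz1 : ((c₀ : R) : G) ≠ 1 := by
    intro hcontra
    apply hc₀
    ext
    simpa using hcontra
  -- an element y of order exactly p in Z
  obtain ⟨y, hyZ, hyp, hy1⟩ : ∃ y, y ∈ Z ∧ y ^ p = 1 ∧ y ≠ 1 := by
    set z : G := ((c₀ : R) : G) with hzdef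
    obtain ⟨k, hk⟩ := hR ⟨z, hZR hzZ⟩
    have hzk : z ^ (p ^ k) = 1 := by
      have := congrArg (Subtype.val) hk
      simpa using this
    obtain ⟨j, hjk, hj⟩ := (Nat.dvd_prime_pow hp).mp (orderOf_dvd_of_pow_eq_one hzk)
    have hj1 : j ≠ 0 := by
      intro hj0
      rw [hj0, pow_zero] at hj
      exact hz1 (orderOf_eq_one_iff.mp hj)
    refine ⟨z ^ (p ^ (j - 1)), Subgroup.pow_mem Z hzZ _, ?_, ?_⟩
    · rw [← pow_mul, ← pow_succ, Nat.sub_add_cancel (Nat.one_le_iff_ne_zero.mpr hj1), ← hj]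
      exact pow_orderOf_eq_one z
    · intro hcontra
      have := orderOf_dvd_of_pow_eq_one hcontra
      rw [hj] at this
      exact absurd (Nat.pow_dvd_pow_iff_le_right hp.one_lt |>.mp this)
        (by omega)
  -- the subgroup V of elements of Z of order dividing p
  have hVmul : ∀ {a b : G}, a ∈ Z ∧ a ^ p = 1 → b ∈ Z ∧ b ^ p = 1 →
      (a * b) ∈ Z ∧ (a * b) ^ p = 1 := by
    intro a b ha hb
    have hab : Commute a b := (hZcomm a ha.1 b (hZR hb.1)).symm
    exact ⟨Z.mul_mem ha.1 hb.1, by rw [hab.mul_pow, ha.2, hb.2, one_mul]⟩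
  set V : Subgroup G :=
    { carrier := {x : G | x ∈ Z ∧ x ^ p = 1}
      one_mem' := ⟨Z.one_mem, one_pow p⟩
      mul_mem' := fun ha hb => hVmul ha hb
      inv_mem' := fun ha => ⟨Z.inv_mem ha.1, by rw [inv_pow, ha.2, inv_one]⟩ } with hVdef
  have hVmem : ∀ {x : G}, x ∈ V ↔ x ∈ Z ∧ x ^ p = 1 := Iff.rfl
  have hVg : ∀ x ∈ V, g * x * g⁻¹ ∈ V := by
    intro x hx
    exact ⟨hZg x hx.1, by
      rw [conj_pow, hx.2, mul_one, mul_inv_cancel]⟩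
  haveI hVcomm : IsMulCommutative V := ⟨⟨fun a b => Subtype.ext (by
    push_cast
    exact hZcomm (↑b) b.2.1 (↑a) (hZR a.2.1))⟩⟩
  letI : CommGroup V := { V.toGroup with mul_comm := fun a b => mul_comm' a b }
  haveI : Nontrivial V := ⟨⟨⟨y, ⟨hyZ, hyp⟩⟩, 1, by
    intro hcontra
    exact hy1 (by simpa using congrArg Subtype.val hcontra)⟩⟩
  -- module structure over ZMod p on the additive version of V
  haveI : Module (ZMod p) (Additive V) := AddCommGroup.zmodModule (by
    intro x
    have : (Additive.toMul x : V) ^ p = 1 := by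
      ext
      exact (Additive.toMul x : V).2.2
    simpa using congrArg Additive.ofMul this)
  -- conjugation by g as a monoid hom on V
  set φ : V →* V :=
    { toFun := fun x => ⟨g * (x : G) * g⁻¹, hVg _ x.2⟩
      map_one' := by ext; simp
      map_mul' := by intro a b; ext; simp [mul_assoc] } with hφdef
  set F : Additive V →+ Additive V := MonoidHom.toAdditive φ with hFdef
  set f : Module.End (ZMod p) (Additive V) :=
    { toFun := F
      map_add' := F.map_add
      map_smul' := by
        intro c x
        show F (c • x) = c • F x
        rw [show c = ((c.val : ℕ) : ZMod p) by simp [ZMod.natCast_val, ZMod.cast_id],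
          Nat.cast_smul_eq_nsmul, Nat.cast_smul_eq_nsmul, map_nsmul] } with hfdef
  have hfpow : ∀ (n : ℕ) (v : Additive V),
      ((Additive.toMul ((f ^ n) v) : V) : G) = g ^ n * ((Additive.toMul v : V) : G) * (g ^ n)⁻¹ := by
    intro n
    induction n with
    | zero => intro v; simp
    | succ n ih =>
      intro v
      rw [pow_succ, Module.End.mul_apply, ih (f v)]
      have hfv1 : ((Additive.toMul (f v) : V) : G) = g * ((Additive.toMul v : V) : G) * g⁻¹ := rfl
      rw [hfv1]
      group
  have hfq : f ^ q = 1 := by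
    apply LinearMap.ext
    intro v
    have hgq : g ^ q = 1 := by rw [← hgord]; exact pow_orderOf_eq_one g
    have := hfpow q v
    rw [hgq] at this
    simp only [one_mul, inv_one, mul_one] at this
    show (f ^ q) v = v
    have h2 : (Additive.toMul ((f ^ q) v) : V) = Additive.toMul v := Subtype.ext this
    exact Additive.toMul.injective h2
  -- apply the eigenvector lemma
  obtain ⟨v, c, hv0, hc0, hfv⟩ := aux_eigen p q hq hqp (Additive V) f hfq
  set x : G := ((Additive.toMul v : V) : G) with hxdef
  have hx1 : x ≠ 1 := by
    intro hcontra
    apply hv0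
    have : (Additive.toMul v : V) = 1 := Subtype.ext hcontra
    simpa using congrArg Additive.ofMul this
  have hxp : x ^ p = 1 := (Additive.toMul v : V).2.2
  have hxord : orderOf x = p := orderOf_eq_prime hxp hx1
  set m : ℕ := c.val with hmdef
  have hconj : g * x * g⁻¹ = x ^ m := by
    have h1 : f v = m • v := by
      rw [hfv, show c = ((m : ℕ) : ZMod p) by simp [hmdef, ZMod.natCast_val, ZMod.cast_id],
        Nat.cast_smul_eq_nsmul]
    have h2 := congrArg (fun w => ((Additive.toMul w : V) : G)) h1
    simp only [toMul_nsmul] at h2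
    calc g * x * g⁻¹ = ((Additive.toMul (f v) : V) : G) := rfl
      _ = (((Additive.toMul v : V) ^ m : V) : G) := h2
      _ = x ^ m := by norm_cast
  -- the inverse conjugation
  set k : ℕ := (c⁻¹).val with hkdef
  have hmk : m * k ≡ 1 [MOD p] := by
    have : ((m * k : ℕ) : ZMod p) = ((1 : ℕ) : ZMod p) := by
      push_cast
      rw [hmdef, hkdef]
      simp [ZMod.natCast_val, ZMod.cast_id, mul_inv_cancel₀ hc0]
    exact (ZMod.natCast_eq_natCast_iff _ _ _).mp this
  have hconj' : g⁻¹ * x * g = x ^ k := by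
    have h1 : g * x ^ k * g⁻¹ = x := by
      rw [← conj_pow, hconj, ← pow_mul]
      rw [show x ^ (m * k) = x ^ 1 from pow_eq_pow_iff_modEq.mpr (by rwa [hxord]), pow_one]
    calc g⁻¹ * x * g = g⁻¹ * (g * x ^ k * g⁻¹) * g := by rw [h1]
      _ = x ^ k := by group
  -- the subgroup generated by x
  set U : Subgroup G := Subgroup.zpowers x with hUdef
  have hUcard : Nat.card U = p := by rw [hUdef, Nat.card_zpowers, hxord]
  have hgU : g ∈ Subgroup.normalizer (U : Set G) := by
    rw [Subgroup.mem_normalizer_iff]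
    intro t
    constructor
    · rintro ht
      obtain ⟨j, hj⟩ := Subgroup.mem_zpowers_iff.mp ht
      rw [← hj]
      have : g * x ^ j * g⁻¹ = (g * x * g⁻¹) ^ j := by
        rw [show g * x * g⁻¹ = (MulAut.conj g) x from rfl, ← map_zpow]; rfl
      rw [this, hconj]
      exact Subgroup.zpow_mem U (Subgroup.mem_zpowers_iff.mpr ⟨(m : ℤ), by norm_cast⟩) j
    · intro ht
      obtain ⟨j, hj⟩ := Subgroup.mem_zpowers_iff.mp ht
      have : t = g⁻¹ * x ^ j * g := by
        rw [hj]; group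
      rw [this]
      have h2 : g⁻¹ * x ^ j * g = (g⁻¹ * x * g) ^ j := by
        rw [show g⁻¹ * x * g = (MulAut.conj g⁻¹) x by simp [MulAut.conj_apply], ← map_zpow]
        simp [MulAut.conj_apply]
      rw [h2, hconj']
      exact Subgroup.zpow_mem U (Subgroup.mem_zpowers_iff.mpr ⟨(k : ℤ), by norm_cast⟩) j
  -- contradiction
  apply h U hUcard
  have : orderOf (⟨g, hgU⟩ : Subgroup.normalizer (U : Set G)) = q := by
    rw [Subgroup.orderOf_mk, hgord]
  rw [← this]
  exact orderOf_dvd_natCard _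
end

section
/- Let G be a finite group, p a prime, and K a normal subgroup of G such that the index |G : K| is not divisible by p. If K has an irreducible character of p-defect zero, then G has an irreducible character of p-defect zero. -/
open CategoryTheory Module Representation

noncomputable section

namespace DefectAux

variable {H : Type} [Group H]

/-- Invariant submodule. -/
def IsInv {M : Type} [AddCommGroup M] [Module ℂ M] (ρ : Representation ℂ H M)
    (U : Submodule ℂ M) : Prop :=
  ∀ h : H, ∀ x ∈ U, ρ h x ∈ U

def subRep {M : Type} [AddCommGroup M] [Module ℂ M] (ρ : Representation ℂ H M)
    (U : Submodule ℂ M) (hU : IsInv ρ U) : Representation ℂ H U where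
  toFun h := (ρ h).restrict (fun x hx => hU h x hx)
  map_one' := by ext x; simp
  map_mul' g h := by ext x; simp

@[simp] lemma subRep_apply {M : Type} [AddCommGroup M] [Module ℂ M] (ρ : Representation ℂ H M)
    (U : Submodule ℂ M) (hU : IsInv ρ U) (h : H) (x : U) :
    (subRep ρ U hU h x : M) = ρ h (x : M) := rfl

def mkHom {X Y : FDRep ℂ H} (f : X →ₗ[ℂ] Y)
    (hf : ∀ h : H, ∀ x : X, f (X.ρ h x) = Y.ρ h (f x)) : X ⟶ Y :=
  ⟨ConcreteCategory.ofHom f, by intro g; ext x; exact hf g x⟩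

@[simp] lemma mkHom_hom {X Y : FDRep ℂ H} (f : X →ₗ[ℂ] Y) (hf) (x : X) :
    (mkHom f hf).hom x = f x := rfl

lemma hom_comm_apply' {X Y : FDRep ℂ H} (f : X ⟶ Y) (g : H) (x : X) :
    f.hom (X.ρ g x) = Y.ρ g (f.hom x) :=
  by have := congrArg (fun φ : X.V ⟶ Y.V => φ x) (f.comm g); exact this

lemma hom_ext' {X Y : FDRep ℂ H} (f g : X ⟶ Y) (h : ∀ x, f.hom x = g.hom x) : f = g := by
  ext x; exact h x

lemma comp_hom_apply' {X Y Z : FDRep ℂ H} (f : X ⟶ Y) (g : Y ⟶ Z) (x : X) :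
    (f ≫ g).hom x = g.hom (f.hom x) := rfl

@[simp] lemma zero_hom_apply' {X Y : FDRep ℂ H} (x : X) : (0 : X ⟶ Y).hom x = 0 :=
  by rw [Action.zero_hom]; rfl

lemma id_hom_apply' {X : FDRep ℂ H} (x : X) : (𝟙 X : X ⟶ X).hom x = x := rfl

lemma hom_ne_zero {X Y : FDRep ℂ H} {f : X ⟶ Y} (hf : f ≠ 0) : ∃ x : X, f.hom x ≠ 0 := by
  by_contra h
  push_neg at h
  exact hf (hom_ext' f 0 (by intro x; rw [h x, zero_hom_apply']))

/-- Build an isomorphism from a morphism with bijective underlying map. -/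
def isoOfBijective {X Y : FDRep ℂ H} (f : X ⟶ Y) (hf : Function.Bijective f.hom) : X ≅ Y := by
  let e := LinearEquiv.ofBijective (f.hom.hom.hom : X →ₗ[ℂ] Y) hf
  refine ⟨f, mkHom (e.symm.toLinearMap) ?_, ?_, ?_⟩
  · intro h y
    apply hf.injective
    have hz : ∀ z : Y, f.hom (e.symm z) = z := fun z => e.apply_symm_apply z
    show f.hom (e.symm (Y.ρ h y)) = f.hom (X.ρ h (e.symm y))
    calc f.hom (e.symm (Y.ρ h y)) = Y.ρ h y := hz _
    _ = Y.ρ h (f.hom (e.symm y)) := by rw [hz]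
    _ = f.hom (X.ρ h (e.symm y)) := (hom_comm_apply' f h _).symm
  · apply hom_ext'; intro x
    rw [comp_hom_apply']
    exact e.symm_apply_apply x
  · apply hom_ext'; intro y
    rw [comp_hom_apply', mkHom_hom, id_hom_apply']
    exact e.apply_symm_apply y

lemma nontrivial_of_simple (X : FDRep ℂ H) [Simple X] : Nontrivial X := by
  by_contra h
  rw [not_nontrivial_iff_subsingleton] at h
  apply CategoryTheory.id_nonzero X
  apply hom_ext'
  intro x
  exact @Subsingleton.elim _ h _ _

/-- If an FDRep has no nontrivial invariant subspaces (and is nontrivial), it is simple. -/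
lemma simple_of_invariants (X : FDRep ℂ H) (h1 : Nontrivial X)
    (h2 : ∀ U : Submodule ℂ X, IsInv X.ρ U → U = ⊥ ∨ U = ⊤) : Simple X := by
  constructor
  intro Y f m
  constructor
  · intro hiso h0
    obtain ⟨x, y, hxy⟩ := h1
    apply hxy
    have h1' : (𝟙 X : X ⟶ X) = 0 := by
      calc (𝟙 X : X ⟶ X) = inv f ≫ f := (IsIso.inv_hom_id f).symm
      _ = inv f ≫ 0 := congrArg (fun g => inv f ≫ g) h0
      _ = 0 := Limits.comp_zero
    have hz : ∀ z : X, z = 0 := by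
      intro z
      calc z = (𝟙 X : X ⟶ X).hom z := rfl
      _ = (0 : X ⟶ X).hom z := by rw [h1']
      _ = 0 := zero_hom_apply' z
    rw [hz x, hz y]
  · intro hf
    -- kernel is zero
    have hker : LinearMap.ker (f.hom.hom.hom : Y →ₗ[ℂ] X) = ⊥ := by
      by_contra hk
      have hkinv : IsInv Y.ρ (LinearMap.ker (f.hom.hom.hom : Y →ₗ[ℂ] X)) := by
        intro h x hx
        rw [LinearMap.mem_ker] at hx ⊢
        calc f.hom (Y.ρ h x) = X.ρ h (f.hom x) := hom_comm_apply' f h x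
        _ = X.ρ h 0 := congrArg (X.ρ h) hx
        _ = 0 := map_zero _
      set N := LinearMap.ker (f.hom.hom.hom : Y →ₗ[ℂ] X)
      let ι : FDRep.of (subRep Y.ρ N hkinv) ⟶ Y :=
        mkHom (N.subtype) (fun h x => rfl)
      have hι : ι ≫ f = (0 : FDRep.of (subRep Y.ρ N hkinv) ⟶ Y) ≫ f := by
        apply hom_ext'
        intro x
        rw [comp_hom_apply', comp_hom_apply']
        rw [zero_hom_apply', map_zero]
        exact x.2
      have := m.right_cancellation _ _ hι
      obtain ⟨x, hx⟩ := Submodule.exists_mem_ne_zero_of_ne_bot hk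
      apply hx.2
      have : ι.hom ⟨x, hx.1⟩ = (0 : FDRep.of (subRep Y.ρ N hkinv) ⟶ Y).hom ⟨x, hx.1⟩ := by rw [this]
      exact this.trans (zero_hom_apply' _)
    -- range is everything
    have hrinv : IsInv X.ρ (LinearMap.range (f.hom.hom.hom : Y →ₗ[ℂ] X)) := by
      rintro h x ⟨y, rfl⟩
      exact ⟨Y.ρ h y, (hom_comm_apply' f h y)⟩
    rcases h2 _ hrinv with hr | hr
    · exfalso
      obtain ⟨y, hy⟩ := hom_ne_zero hf
      apply hy
      have : f.hom y ∈ LinearMap.range (f.hom.hom.hom : Y →ₗ[ℂ] X) := ⟨y, rfl⟩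
      rw [hr] at this
      simpa using this
    · have hb : Function.Bijective (f.hom.hom.hom : Y →ₗ[ℂ] X) := by
        constructor
        · rw [← LinearMap.ker_eq_bot]; exact hker
        · rw [← LinearMap.range_eq_top]; exact hr
      exact ⟨⟨(isoOfBijective f hb).inv, (isoOfBijective f hb).hom_inv_id, (isoOfBijective f hb).inv_hom_id⟩⟩

/-- A simple FDRep has no nontrivial invariant subspaces. -/
lemma invariants_of_simple (X : FDRep ℂ H) [Simple X] (U : Submodule ℂ X)
    (hU : IsInv X.ρ U) : U = ⊥ ∨ U = ⊤ := by
  by_cases h0 : U = ⊥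
  · exact Or.inl h0
  right
  let ι : FDRep.of (subRep X.ρ U hU) ⟶ X := mkHom (U.subtype) (fun h x => rfl)
  have hmono : Mono ι := by
    constructor
    intro Z u v huv
    apply hom_ext'
    intro z
    have := congrArg (fun (w : Z ⟶ X) => w.hom z) huv
    simp only [comp_hom_apply'] at this
    exact Subtype.ext this
  have hι : ι ≠ 0 := by
    obtain ⟨x, hx⟩ := Submodule.exists_mem_ne_zero_of_ne_bot h0
    intro h
    apply hx.2
    have : ι.hom ⟨x, hx.1⟩ = (0 : FDRep.of (subRep X.ρ U hU) ⟶ X).hom ⟨x, hx.1⟩ := by rw [h]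
    exact this.trans (zero_hom_apply' _)
  have hiso : IsIso ι := (Simple.mono_isIso_iff_nonzero ι).mpr hι
  -- surjectivity of the inclusion gives U = ⊤
  rw [Submodule.eq_top_iff']
  intro x
  have hz : ι.hom ((inv ι).hom x) = x := by
    calc ι.hom ((inv ι).hom x) = ((inv ι) ≫ ι).hom x := rfl
    _ = (𝟙 X : X ⟶ X).hom x := by rw [IsIso.inv_hom_id]
    _ = x := rfl
  rw [← hz]
  exact ((inv ι).hom x).2

/-- Concrete Schur: a nonzero morphism between simples gives an isomorphism. -/
lemma schur_iso {X Y : FDRep ℂ H} [Simple X] [Simple Y] (f : X ⟶ Y) (hf : f ≠ 0) :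
    Nonempty (X ≅ Y) := by
  have hb : Function.Bijective (f.hom.hom.hom : X →ₗ[ℂ] Y) := by
    constructor
    · rw [← LinearMap.ker_eq_bot]
      have hkinv : IsInv X.ρ (LinearMap.ker (f.hom.hom.hom : X →ₗ[ℂ] Y)) := by
        intro h x hx
        rw [LinearMap.mem_ker] at hx ⊢
        calc f.hom (X.ρ h x) = Y.ρ h (f.hom x) := hom_comm_apply' f h x
        _ = Y.ρ h 0 := congrArg (Y.ρ h) hx
        _ = 0 := map_zero _
      rcases invariants_of_simple X _ hkinv with h | h
      · exact h
      · exfalso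
        obtain ⟨x, hx⟩ := hom_ne_zero hf
        apply hx
        have : x ∈ LinearMap.ker (f.hom.hom.hom : X →ₗ[ℂ] Y) := by rw [h]; trivial
        exact this
    · rw [← LinearMap.range_eq_top]
      have hrinv : IsInv Y.ρ (LinearMap.range (f.hom.hom.hom : X →ₗ[ℂ] Y)) := by
        rintro h x ⟨y, rfl⟩
        exact ⟨X.ρ h y, (hom_comm_apply' f h y)⟩
      rcases invariants_of_simple Y _ hrinv with h | h
      · exfalso
        obtain ⟨x, hx⟩ := hom_ne_zero hf
        apply hx
        have : f.hom x ∈ LinearMap.range (f.hom.hom.hom : X →ₗ[ℂ] Y) := ⟨x, rfl⟩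
        rw [h] at this
        simpa using this
      · exact h
  exact ⟨isoOfBijective f hb⟩

section Maschke
variable [Fintype H]

lemma exists_equivariant_proj {M : Type} [AddCommGroup M] [Module ℂ M] [FiniteDimensional ℂ M]
    (ρ : Representation ℂ H M) (U : Submodule ℂ M) (hU : IsInv ρ U) :
    ∃ π : M →ₗ[ℂ] M, (∀ g : H, ∀ x : M, π (ρ g x) = ρ g (π x)) ∧
      (∀ x : M, π x ∈ U) ∧ (∀ x ∈ U, π x = x) := by
  obtain ⟨C0, hC0⟩ := Submodule.exists_isCompl U
  set π₀ : M →ₗ[ℂ] M := U.subtype ∘ₗ (U.projectionOnto C0 hC0) with hπ₀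
  have hπ₀U : ∀ x ∈ U, π₀ x = x := by
    intro x hx
    have := Submodule.linearProjOfIsCompl_apply_left hC0 ⟨x, hx⟩
    simp only [hπ₀, LinearMap.coe_comp, Function.comp_apply]
    rw [this]
    rfl
  have hπ₀mem : ∀ x : M, π₀ x ∈ U := fun x => (U.projectionOnto C0 hC0 x).2
  set c : ℂ := (Fintype.card H : ℂ)⁻¹ with hc
  have hcard : (Fintype.card H : ℂ) ≠ 0 := Nat.cast_ne_zero.mpr Fintype.card_ne_zero
  have hmul : ∀ (a b : H) (y : M), ρ a (ρ b y) = ρ (a * b) y := by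
    intro a b y
    rw [map_mul]
    rfl
  set π : M →ₗ[ℂ] M := c • ∑ g : H, (ρ g) ∘ₗ π₀ ∘ₗ (ρ g⁻¹) with hπ
  have happ : ∀ x, π x = c • ∑ g : H, ρ g (π₀ (ρ g⁻¹ x)) := by
    intro x
    rw [hπ]
    simp [LinearMap.sum_apply]
  refine ⟨π, ?_, ?_, ?_⟩
  · intro g₀ x
    rw [happ, happ, map_smul, map_sum]
    congr 1
    apply Fintype.sum_equiv (Equiv.mulLeft g₀).symm
    intro g
    show ρ g (π₀ (ρ g⁻¹ (ρ g₀ x)))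
        = ρ g₀ (ρ ((Equiv.mulLeft g₀).symm g) (π₀ (ρ ((Equiv.mulLeft g₀).symm g)⁻¹ x)))
    have e1 : ((Equiv.mulLeft g₀).symm g) = g₀⁻¹ * g := rfl
    rw [e1]
    calc ρ g (π₀ (ρ g⁻¹ (ρ g₀ x))) = ρ g (π₀ (ρ (g⁻¹ * g₀) x)) := by rw [hmul]
    _ = ρ g₀ (ρ (g₀⁻¹ * g) (π₀ (ρ (g₀⁻¹ * g)⁻¹ x))) := by
        rw [hmul g₀ (g₀⁻¹ * g), mul_inv_cancel_left]
        congr 2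
        group
  · intro x
    rw [happ]
    refine Submodule.smul_mem _ _ (Submodule.sum_mem _ (fun g _ => ?_))
    exact hU g _ (hπ₀mem _)
  · intro x hx
    rw [happ]
    have : ∀ g : H, ρ g (π₀ (ρ g⁻¹ x)) = x := by
      intro g
      rw [hπ₀U _ (hU g⁻¹ x hx), hmul, mul_inv_cancel, map_one]
      rfl
    rw [Finset.sum_congr rfl (fun g _ => this g), Finset.sum_const, Finset.card_univ,
      ← Nat.cast_smul_eq_nsmul ℂ, smul_smul, hc, inv_mul_cancel₀ hcard, one_smul]

lemma exists_invariant_compl {M : Type} [AddCommGroup M] [Module ℂ M] [FiniteDimensional ℂ M]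
    (ρ : Representation ℂ H M) (U : Submodule ℂ M) (hU : IsInv ρ U) :
    ∃ C : Submodule ℂ M, IsInv ρ C ∧ IsCompl U C := by
  obtain ⟨π, hcomm, hmem, hfix⟩ := exists_equivariant_proj ρ U hU
  set f : M →ₗ[ℂ] U := LinearMap.codRestrict U π hmem with hf
  have hproj : ∀ x : U, f x = x := fun x => Subtype.ext (hfix x x.2)
  refine ⟨LinearMap.ker f, ?_, LinearMap.isCompl_of_proj hproj⟩
  intro g x hx
  rw [LinearMap.mem_ker] at hx ⊢
  have hx' : π x = 0 := congrArg Subtype.val hx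
  apply Subtype.ext
  show π (ρ g x) = 0
  rw [hcomm, hx', map_zero]

lemma character_eq_add (X : FDRep ℂ H) (U C : Submodule ℂ X) (hU : IsInv X.ρ U)
    (hC : IsInv X.ρ C) (hcompl : IsCompl U C) (g : H) :
    X.character g = (FDRep.of (subRep X.ρ U hU)).character g
      + (FDRep.of (subRep X.ρ C hC)).character g := by
  set e := Submodule.prodEquivOfIsCompl U C hcompl with he
  set fU := (X.ρ g).restrict (fun x hx => hU g x hx) with hfU
  set fC := (X.ρ g).restrict (fun x hx => hC g x hx) with hfC
  have hconj : X.ρ g = e.conj (LinearMap.prodMap fU fC) := by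
    apply LinearMap.ext
    intro x
    rw [LinearEquiv.conj_apply]
    show X.ρ g x = e ((LinearMap.prodMap fU fC) (e.symm x))
    have key : ∀ z : U × C, e ((LinearMap.prodMap fU fC) z) = X.ρ g (e z) := by
      intro z
      rw [Submodule.coe_prodEquivOfIsCompl' , Submodule.coe_prodEquivOfIsCompl']
      show ((fU z.1 : X) + (fC z.2 : X)) = X.ρ g ((z.1 : X) + (z.2 : X))
      rw [map_add]
      rfl
    rw [key, e.apply_symm_apply]
  show LinearMap.trace ℂ _ (X.ρ g) = LinearMap.trace ℂ _ (subRep X.ρ U hU g)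
      + LinearMap.trace ℂ _ (subRep X.ρ C hC g)
  rw [hconj, LinearMap.trace_conj', LinearMap.trace_prodMap']
  rfl

end Maschke

section Decomp
variable [Fintype H]

set_option linter.unusedSectionVars false

lemma exists_simple_sub (X : FDRep ℂ H) (N : Submodule ℂ X) (hN : IsInv X.ρ N)
    (h0 : N ≠ ⊥) :
    ∃ (S : Submodule ℂ X) (hS : IsInv X.ρ S), S ≤ N ∧ S ≠ ⊥ ∧
      Simple (FDRep.of (subRep X.ρ S hS)) := by
  classical
  have hex : ∃ n : ℕ, ∃ S : Submodule ℂ X, (IsInv X.ρ S ∧ S ≠ ⊥ ∧ S ≤ N) ∧ finrank ℂ S = n :=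
    ⟨finrank ℂ N, N, ⟨hN, h0, le_rfl⟩, rfl⟩
  obtain ⟨S, ⟨hS, hS0, hSN⟩, hrank⟩ := Nat.find_spec hex
  refine ⟨S, hS, hSN, hS0, ?_⟩
  apply simple_of_invariants
  · exact Submodule.nontrivial_iff_ne_bot.mpr hS0
  · intro U' hU'
    by_contra hcon
    push_neg at hcon
    obtain ⟨h1, h2⟩ := hcon
    have hU'2 : IsInv (subRep X.ρ S hS) U' := hU'
    set U'' := Submodule.map S.subtype U' with hU''def
    have hinv : IsInv X.ρ U'' := by
      rintro g x hx
      obtain ⟨y, hy, rfl⟩ := Submodule.mem_map.mp hx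
      exact Submodule.mem_map.mpr ⟨subRep X.ρ S hS g y, hU'2 g y hy, rfl⟩
    have hne : U'' ≠ ⊥ := by
      obtain ⟨y, hy, hy0⟩ := Submodule.exists_mem_ne_zero_of_ne_bot h1
      intro hbot
      have hmem : S.subtype y ∈ U'' := Submodule.mem_map.mpr ⟨y, hy, rfl⟩
      rw [hbot, Submodule.mem_bot] at hmem
      exact hy0 (Subtype.ext hmem)
    have hle : U'' ≤ N := le_trans (Submodule.map_subtype_le S U') hSN
    have hlt : finrank ℂ U'' < Nat.find hex := by
      rw [← hrank]
      have e1 : finrank ℂ U'' = finrank ℂ U' := Submodule.finrank_map_subtype_eq S U'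
      rw [e1]
      calc finrank ℂ U' < finrank ℂ (⊤ : Submodule ℂ S) :=
        Submodule.finrank_lt_finrank_of_lt (lt_top_iff_ne_top.mpr h2)
      _ = finrank ℂ S := finrank_top ℂ S
    exact Nat.find_min hex hlt ⟨U'', ⟨hinv, hne, hle⟩, rfl⟩

lemma character_decomp_aux : ∀ (d : ℕ) (X : FDRep ℂ H), finrank ℂ X ≤ d →
    ∃ (n : ℕ) (S : Fin n → FDRep ℂ H), (∀ i, Simple (S i)) ∧
      ∀ g : H, X.character g = ∑ i, (S i).character g := by
  intro d
  induction d with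
  | zero =>
    intro X hX
    refine ⟨0, Fin.elim0, fun i => i.elim0, fun g => ?_⟩
    have hsub : Subsingleton X := by
      rw [← Module.finrank_zero_iff (R := ℂ)]
      omega
    have : X.ρ g = 0 := Subsingleton.elim _ _
    show LinearMap.trace ℂ _ (X.ρ g) = _
    rw [this, map_zero]
    simp
  | succ d ih =>
    intro X hX
    by_cases h0 : finrank ℂ X = 0
    · refine ⟨0, Fin.elim0, fun i => i.elim0, fun g => ?_⟩
      have hsub : Subsingleton X := by
        rw [← Module.finrank_zero_iff (R := ℂ)]
        omega
      have : X.ρ g = 0 := Subsingleton.elim _ _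
      show LinearMap.trace ℂ _ (X.ρ g) = _
      rw [this, map_zero]
      simp
    · have hnt : Nontrivial X := by
        apply Module.nontrivial_of_finrank_pos (R := ℂ)
        omega
      have htop : (⊤ : Submodule ℂ X) ≠ ⊥ := by
        intro h
        obtain ⟨x, y, hxy⟩ := hnt
        apply hxy
        have hx : x ∈ (⊥ : Submodule ℂ X) := h ▸ Submodule.mem_top
        have hy : y ∈ (⊥ : Submodule ℂ X) := h ▸ Submodule.mem_top
        rw [Submodule.mem_bot] at hx hy
        rw [hx, hy]
      obtain ⟨S, hS, _, hS0, hsimp⟩ := exists_simple_sub X ⊤ (fun g x _ => trivial) htop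
      obtain ⟨C, hC, hcompl⟩ := exists_invariant_compl X.ρ S hS
      have hrankC : finrank ℂ C ≤ d := by
        have hadd := Submodule.finrank_add_eq_of_isCompl hcompl
        have hSpos : 0 < finrank ℂ S := by
          by_contra hS'
          exact hS0 ((Submodule.finrank_eq_zero).mp (by omega))
        omega
      obtain ⟨n, T, hT, hTchar⟩ := ih (FDRep.of (subRep X.ρ C hC)) hrankC
      refine ⟨n + 1, Fin.cons (FDRep.of (subRep X.ρ S hS)) T, ?_, ?_⟩
      · intro i
        refine Fin.cases ?_ ?_ i
        · exact hsimp
        · exact hT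
      · intro g
        rw [character_eq_add X S C hS hC hcompl g, hTchar g, Fin.sum_univ_succ]
        simp only [Fin.cons_zero, Fin.cons_succ]

lemma character_decomp (X : FDRep ℂ H) :
    ∃ (n : ℕ) (S : Fin n → FDRep ℂ H), (∀ i, Simple (S i)) ∧
      ∀ g : H, X.character g = ∑ i, (S i).character g :=
  character_decomp_aux (finrank ℂ X) X le_rfl

/-- Character formula for the dimension of Hom spaces. -/
lemma finrank_hom_eq (X Y : FDRep ℂ H) :
    (finrank ℂ (X ⟶ Y) : ℂ) * (Fintype.card H : ℂ) =
      ∑ g : H, Y.character g * X.character g⁻¹ := by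
  haveI : Invertible (Fintype.card H : ℂ) :=
    invertibleOfNonzero (Nat.cast_ne_zero.mpr Fintype.card_ne_zero)
  have h1 : ∀ g : H, Y.character g * X.character g⁻¹
      = (FDRep.of (Representation.linHom X.ρ Y.ρ)).character g := by
    intro g
    rw [FDRep.char_linHom]
    ring
  rw [Finset.sum_congr rfl (fun g _ => h1 g)]
  have h2 := FDRep.average_char_eq_finrank_invariants (FDRep.of (Representation.linHom X.ρ Y.ρ))
  rw [show (FDRep.of (Representation.linHom X.ρ Y.ρ)).ρ = Representation.linHom X.ρ Y.ρ from
    FDRep.of_ρ' _] at h2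
  have h3 : finrank ℂ ((Representation.linHom X.ρ Y.ρ).invariants) = finrank ℂ (X ⟶ Y) :=
    (Representation.linHom.invariantsEquivFDRepHom (G := H) X Y).finrank_eq
  have h3' : finrank ℂ ((Representation.linHom X.ρ Y.ρ).invariants) = finrank ℂ (X ⟶ Y) := h3
  have h7 : ⅟(Fintype.card H : ℂ) • ∑ g : H, (FDRep.of (Representation.linHom X.ρ Y.ρ)).character g
      = (finrank ℂ (X ⟶ Y) : ℂ) := by
    rw [← h2.trans (congrArg Nat.cast h3'), invOf_eq_inv, smul_eq_mul, Nat.card_eq_fintype_card]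
  rw [← h7, smul_eq_mul, mul_comm (⅟(Fintype.card H : ℂ)) _, mul_assoc, invOf_mul_self, mul_one]

end Decomp

section Regular
variable [Fintype H]

def regRep (H : Type) [Group H] [Fintype H] : FDRep ℂ H :=
  haveI : FiniteDimensional ℂ (H →₀ ℂ) := Module.Finite.of_basis Finsupp.basisSingleOne
  FDRep.of (Representation.ofMulAction ℂ H H)

lemma regRep_character [DecidableEq H] (g : H) :
    (regRep H).character g = if g = 1 then (Fintype.card H : ℂ) else 0 := by
  classical
  haveI : FiniteDimensional ℂ (H →₀ ℂ) := Module.Finite.of_basis Finsupp.basisSingleOne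
  have h0 : (regRep H).character g
      = LinearMap.trace ℂ (H →₀ ℂ) (Finsupp.lmapDomain ℂ ℂ (g • ·)) := by
    show LinearMap.trace ℂ _ (Representation.ofMulAction ℂ H H g) = _
    rw [Representation.ofMulAction_def]
    exact LinearMap.trace_conj' (Finsupp.lmapDomain ℂ ℂ (g • ·) : (H →₀ ℂ) →ₗ[ℂ] (H →₀ ℂ)) (MonoidAlgebra.coeffLinearEquiv ℂ).symm
  rw [h0, LinearMap.trace_eq_matrix_trace ℂ Finsupp.basisSingleOne, Matrix.trace]
  have hdiag : ∀ h : H,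
      (LinearMap.toMatrix Finsupp.basisSingleOne Finsupp.basisSingleOne
        (Finsupp.lmapDomain ℂ ℂ (g • ·))) h h = if g = 1 then 1 else 0 := by
    intro h
    rw [LinearMap.toMatrix_apply]
    have hb : (Finsupp.basisSingleOne : Basis H ℂ (H →₀ ℂ)) h = Finsupp.single h 1 := by
      rw [show ((Finsupp.basisSingleOne : Basis H ℂ (H →₀ ℂ)) h : H →₀ ℂ)
        = (fun i => Finsupp.single i (1:ℂ)) h from congrFun Finsupp.coe_basisSingleOne h]
    rw [hb]
    rw [Finsupp.lmapDomain_apply, Finsupp.mapDomain_single]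
    have : (Finsupp.basisSingleOne (ι := H) (R := ℂ)).repr (Finsupp.single (g • h) 1)
        = Finsupp.single (g • h) 1 := by
      simp [Finsupp.basisSingleOne]
    rw [this]
    rw [Finsupp.single_apply]
    have : g • h = h ↔ g = 1 := by
      constructor
      · intro hh
        have : g * h = h := hh
        exact mul_right_cancel (by rw [one_mul]; exact this)
      · intro hh; rw [hh, one_smul]
    by_cases hg : g = 1
    · rw [if_pos hg, if_pos (this.mpr hg)]
    · rw [if_neg hg, if_neg (fun c => hg (this.mp c))]
  simp only [Matrix.diag_apply]
  rw [Finset.sum_congr rfl (fun h _ => hdiag h)]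
  by_cases hg : g = 1
  · simp [hg, Finset.card_univ]
  · simp [hg]

end Regular

section Twist
variable [Fintype H]

/-- Twisting a representation by a group automorphism preserves simplicity. -/
lemma simple_twist (σ : H ≃* H) (X : FDRep ℂ H) (hX : Simple X) :
    Simple (FDRep.of (X.ρ.comp σ.toMonoidHom)) := by
  haveI := hX
  apply simple_of_invariants
  · exact nontrivial_of_simple X
  · intro U hU
    have hU' : IsInv X.ρ U := by
      intro h x hx
      have := hU (σ.symm h) x hx
      show X.ρ h x ∈ U
      rw [show h = σ (σ.symm h) by rw [MulEquiv.apply_symm_apply]]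
      exact this
    exact invariants_of_simple X U hU'

lemma finrank_eq_of_iso {X Y : FDRep ℂ H} (φ : X ≅ Y) : finrank ℂ X = finrank ℂ Y :=
  (FDRep.isoToLinearEquiv φ).finrank_eq

lemma iso_hom_bijective {X Y : FDRep ℂ H} (φ : X ≅ Y) :
    Function.Bijective (φ.hom.hom.hom.hom : X →ₗ[ℂ] Y) := by
  constructor
  · intro a b hab
    have h1 : ∀ y : X, φ.inv.hom (φ.hom.hom y) = y := by
      intro y
      calc φ.inv.hom (φ.hom.hom y) = (φ.hom ≫ φ.inv).hom y := rfl
      _ = (𝟙 X : X ⟶ X).hom y := by rw [φ.hom_inv_id]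
      _ = y := rfl
    rw [← h1 a, ← h1 b]
    show φ.inv.hom ((φ.hom.hom.hom.hom : X →ₗ[ℂ] Y) a) = φ.inv.hom ((φ.hom.hom.hom.hom : X →ₗ[ℂ] Y) b)
    rw [hab]
  · intro y
    refine ⟨φ.inv.hom y, ?_⟩
    calc φ.hom.hom (φ.inv.hom y) = (φ.inv ≫ φ.hom).hom y := rfl
    _ = (𝟙 Y : Y ⟶ Y).hom y := by rw [φ.inv_hom_id]
    _ = y := rfl

end Twist

section Clifford

variable {G : Type} [Group G] [Fintype G] (K : Subgroup G) [K.Normal]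

/-- Conjugation automorphism of a normal subgroup. -/
def conjAut (g : G) : (K : Subgroup G) ≃* (K : Subgroup G) where
  toFun k := ⟨g⁻¹ * (k : G) * g, by
    have := (‹K.Normal›).conj_mem (k : G) k.2 g⁻¹
    simpa using this⟩
  invFun k := ⟨g * (k : G) * g⁻¹, (‹K.Normal›).conj_mem (k : G) k.2 g⟩
  left_inv k := by ext; simp [mul_assoc]
  right_inv k := by ext; simp [mul_assoc]
  map_mul' a b := by ext; simp [mul_assoc]

variable {K}

lemma clifford (W : FDRep ℂ K) [hWs : Simple W] (V : FDRep ℂ G) [hVs : Simple V]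
    (f₀ : W ⟶ FDRep.of (V.ρ.comp K.subtype)) (hf₀ : f₀ ≠ 0) :
    finrank ℂ W ∣ finrank ℂ V := by
  classical
  revert f₀
  set ResV : FDRep ℂ K := FDRep.of (V.ρ.comp K.subtype) with hResV
  intro f₀ hf₀
  -- basic helpers
  have hmulV : ∀ (a b : G) (x : V), V.ρ a (V.ρ b x) = V.ρ (a * b) x := by
    intro a b x
    rw [map_mul]
    rfl
  have hres : ∀ (k : K) (x : ResV), ResV.ρ k x = V.ρ (k : G) x := fun k x => rfl
  set Φ : G → ((ResV : Type) →ₗ[ℂ] (ResV : Type)) := fun g => V.ρ g with hΦ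
  have hWpos : 0 < finrank ℂ W := by
    have := nontrivial_of_simple W
    exact Module.finrank_pos
  -- the "conjugate of W" predicate
  set IsGood : Submodule ℂ ResV → Prop := fun R =>
    ∃ hR : IsInv ResV.ρ R, Simple (FDRep.of (subRep ResV.ρ R hR)) ∧ finrank ℂ R = finrank ℂ W
    with hIsGood
  -- goodness is stable under the G-action
  have hVinj : ∀ (g : G), Function.Injective (Φ g) := by
    intro g a b hab
    have hab' : V.ρ g a = V.ρ g b := hab
    have h1 := congrArg (V.ρ g⁻¹) hab'
    rwa [hmulV, hmulV, inv_mul_cancel, map_one, Module.End.one_apply, Module.End.one_apply] at h1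
  have map_good : ∀ (g : G) (R : Submodule ℂ ResV), IsGood R →
      IsGood (Submodule.map (Φ g) R) := by
    rintro g R ⟨hRinv, hRsimple, hRdim⟩
    have hR'inv : IsInv ResV.ρ (Submodule.map (Φ g) R) := by
      rintro k x ⟨y, hy, rfl⟩
      refine ⟨V.ρ ((conjAut K g k : K) : G) y, hRinv (conjAut K g k) y hy, ?_⟩
      show V.ρ g (V.ρ (g⁻¹ * (k : G) * g) y) = V.ρ (k : G) (V.ρ g y)
      rw [hmulV, hmulV]
      congr 1
      group
    refine ⟨hR'inv, ?_, ?_⟩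
    · -- simple via twist
      set σ := conjAut K g with hσ
      set ρR := subRep ResV.ρ R hRinv with hρR
      haveI hT : Simple (FDRep.of ((FDRep.of ρR).ρ.comp σ.toMonoidHom)) :=
        simple_twist σ (FDRep.of ρR) hRsimple
      have hmem : ∀ x : (Submodule.map (Φ g) R), V.ρ g⁻¹ (x : ResV) ∈ R := by
        rintro ⟨x, hx⟩
        obtain ⟨y, hy, rfl⟩ := hx
        show V.ρ g⁻¹ (V.ρ g y) ∈ R
        rw [hmulV, inv_mul_cancel, map_one, Module.End.one_apply]
        exact hy
      set αlin : (Submodule.map (Φ g) R) →ₗ[ℂ] R :=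
        ((Φ g⁻¹).domRestrict (Submodule.map (Φ g) R)).codRestrict R hmem with hαlin
      have hαcomm : ∀ (k : K) (x : (Submodule.map (Φ g) R)),
          αlin ((subRep ResV.ρ _ hR'inv) k x)
            = ((FDRep.of ρR).ρ.comp σ.toMonoidHom) k (αlin x) := by
        intro k x
        apply Subtype.ext
        show V.ρ g⁻¹ (V.ρ (k : G) (x : ResV)) = V.ρ ((σ k : K) : G) (V.ρ g⁻¹ (x : ResV))
        rw [hmulV, hmulV]
        show V.ρ (g⁻¹ * (k:G)) (x : ResV) = V.ρ ((g⁻¹ * (k:G) * g) * g⁻¹) (x : ResV)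
        congr 1
        group
      set α := mkHom (X := FDRep.of (subRep ResV.ρ _ hR'inv))
        (Y := FDRep.of ((FDRep.of ρR).ρ.comp σ.toMonoidHom)) αlin hαcomm with hα
      have hbijlin : Function.Bijective αlin := by
        constructor
        · intro a b hab
          apply Subtype.ext
          apply hVinj g⁻¹
          exact congrArg Subtype.val hab
        · intro y
          refine ⟨⟨V.ρ g (y : ResV), ⟨(y : ResV), y.2, rfl⟩⟩, ?_⟩
          apply Subtype.ext
          show V.ρ g⁻¹ (V.ρ g (y : ResV)) = (y : ResV)
          rw [hmulV, inv_mul_cancel, map_one, Module.End.one_apply]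
      have hbij : Function.Bijective (α.hom.hom.hom : _ →ₗ[ℂ] _) := hbijlin
      exact Simple.of_iso (isoOfBijective α hbij)
    · -- dimension
      have e := Submodule.equivMapOfInjective (Φ g) (hVinj g) R
      rw [← hRdim]
      exact e.finrank_eq.symm
  -- any nonzero simple subrep inside a finite sup of good submodules has dim W
  have L5 : ∀ (s : Finset (Submodule ℂ ResV)), (∀ R ∈ s, IsGood R) →
      ∀ (S : Submodule ℂ ResV) (hS : IsInv ResV.ρ S), S ≠ ⊥ →
        Simple (FDRep.of (subRep ResV.ρ S hS)) → S ≤ s.sup id →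
        finrank ℂ S = finrank ℂ W := by
    intro s hs S hS hS0 hSsimple hle
    obtain ⟨π, hπcomm, hπmem, hπfix⟩ := exists_equivariant_proj ResV.ρ S hS
    have hex : ∃ R ∈ s, ∃ x ∈ R, π x ≠ 0 := by
      by_contra hco
      push_neg at hco
      have hker : s.sup id ≤ LinearMap.ker π := by
        apply Finset.sup_le
        intro R hR x hx
        exact LinearMap.mem_ker.mpr (hco R hR x hx)
      obtain ⟨x, hx, hx0⟩ := Submodule.exists_mem_ne_zero_of_ne_bot hS0
      have h1 : π x = 0 := hker (hle hx)
      rw [hπfix x hx] at h1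
      exact hx0 h1
    obtain ⟨R, hRs, x, hxR, hx0⟩ := hex
    obtain ⟨hRinv, hRsimple, hRdim⟩ := hs R hRs
    haveI := hRsimple
    haveI := hSsimple
    have hmem' : ∀ y : R, π (y : ResV) ∈ S := fun y => hπmem _
    set βlin : R →ₗ[ℂ] S := (π.domRestrict R).codRestrict S hmem' with hβlin
    have hβcomm : ∀ (k : K) (y : R),
        βlin ((subRep ResV.ρ R hRinv) k y) = (subRep ResV.ρ S hS) k (βlin y) := by
      intro k y
      apply Subtype.ext
      show π (ResV.ρ k (y : ResV)) = ResV.ρ k (π (y : ResV))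
      exact hπcomm k _
    set β := mkHom (X := FDRep.of (subRep ResV.ρ R hRinv))
      (Y := FDRep.of (subRep ResV.ρ S hS)) βlin hβcomm with hβ
    have hβ0 : β ≠ 0 := by
      intro hb
      apply hx0
      have h1 : β.hom ⟨x, hxR⟩ = (0 : FDRep.of (subRep ResV.ρ R hRinv)
          ⟶ FDRep.of (subRep ResV.ρ S hS)).hom ⟨x, hxR⟩ := by rw [hb]
      rw [zero_hom_apply'] at h1
      have h2 := congrArg (fun z : S => (z : ResV)) h1
      exact h2
    obtain ⟨φ⟩ := schur_iso β hβ0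
    have h3 : finrank ℂ R = finrank ℂ S := finrank_eq_of_iso φ
    rw [← h3]
    exact hRdim
  -- maximal good sup Z is G-invariant hence ⊤
  have main : ∀ (S : Submodule ℂ ResV) (hS : IsInv ResV.ρ S), S ≠ ⊥ →
      Simple (FDRep.of (subRep ResV.ρ S hS)) → finrank ℂ S = finrank ℂ W := by
    intro S hS hS0 hSsimple
    set GoodSup : Submodule ℂ ResV → Prop := fun N =>
      ∃ s : Finset (Submodule ℂ ResV), (∀ R ∈ s, IsGood R) ∧ N = s.sup id with hGoodSup
    have good_bot : GoodSup ⊥ := ⟨∅, by simp, by simp⟩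
    have good_sup : ∀ N₁ N₂, GoodSup N₁ → GoodSup N₂ → GoodSup (N₁ ⊔ N₂) := by
      rintro N₁ N₂ ⟨s₁, hs₁, rfl⟩ ⟨s₂, hs₂, rfl⟩
      exact ⟨s₁ ∪ s₂, fun R hR => (Finset.mem_union.mp hR).elim (hs₁ R) (hs₂ R),
        (Finset.sup_union).symm⟩
    have good_single : ∀ R, IsGood R → GoodSup R := by
      intro R hR
      refine ⟨{R}, ?_, by simp⟩
      intro R' hR'
      rw [Finset.mem_singleton] at hR'
      rw [hR']
      exact hR
    have good_map : ∀ (g : G) (N), GoodSup N → GoodSup (Submodule.map (Φ g) N) := by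
      rintro g N ⟨s, hs, rfl⟩
      have hmap_sup : ∀ (t : Finset (Submodule ℂ ResV)),
          Submodule.map (Φ g) (t.sup id)
            = t.sup (fun R => Submodule.map (Φ g) R) := by
        intro t
        induction t using Finset.induction_on with
        | empty => simp
        | insert _ _ ha ih =>
          rw [Finset.sup_insert, Finset.sup_insert, Submodule.map_sup, ih]
          rfl
      refine ⟨s.image (fun R => Submodule.map (Φ g) R), ?_, ?_⟩
      · intro R hR
        obtain ⟨R₀, hR₀, rfl⟩ := Finset.mem_image.mp hR
        exact map_good g R₀ (hs R₀ hR₀)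
      · rw [Finset.sup_image, hmap_sup]
        rfl
    set P : ℕ → Prop := fun n => ∃ N, GoodSup N ∧ finrank ℂ N = n with hP
    have hP0 : P 0 := ⟨⊥, good_bot, finrank_bot ℂ _⟩
    set n₀ := Nat.findGreatest P (finrank ℂ ResV) with hn₀
    have hPn₀ : P n₀ := Nat.findGreatest_spec (Nat.zero_le _) hP0
    obtain ⟨Z, hZgood, hZrank⟩ := hPn₀
    have hmax : ∀ N', GoodSup N' → finrank ℂ N' ≤ n₀ := by
      intro N' hN'
      by_contra hgt
      push_neg at hgt
      exact Nat.findGreatest_is_greatest hgt (Submodule.finrank_le N') ⟨N', hN', rfl⟩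
    have habsorb : ∀ N', GoodSup N' → N' ⊔ Z = Z := by
      intro N' h
      have h1 : GoodSup (N' ⊔ Z) := good_sup _ _ h hZgood
      have h2 : Z ≤ N' ⊔ Z := le_sup_right
      have h3 : Z = N' ⊔ Z := Submodule.eq_of_le_of_finrank_le h2
        (by rw [hZrank]; exact hmax _ h1)
      exact h3.symm
    -- the range of f₀ is good
    have hrinv : IsInv ResV.ρ (LinearMap.range (f₀.hom.hom.hom : W →ₗ[ℂ] ResV)) := by
      rintro k x ⟨y, rfl⟩
      exact ⟨W.ρ k y, hom_comm_apply' f₀ k y⟩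
    have hkerf₀ : LinearMap.ker (f₀.hom.hom.hom : W →ₗ[ℂ] ResV) = ⊥ := by
      have hkinv : IsInv W.ρ (LinearMap.ker (f₀.hom.hom.hom : W →ₗ[ℂ] ResV)) := by
        intro k y hy
        rw [LinearMap.mem_ker] at hy ⊢
        calc f₀.hom (W.ρ k y) = ResV.ρ k (f₀.hom y) := hom_comm_apply' f₀ k y
        _ = ResV.ρ k 0 := congrArg (ResV.ρ k) hy
        _ = 0 := map_zero _
      rcases invariants_of_simple W _ hkinv with h | h
      · exact h
      · exfalso
        obtain ⟨y, hy⟩ := hom_ne_zero hf₀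
        apply hy
        have : y ∈ LinearMap.ker (f₀.hom.hom.hom : W →ₗ[ℂ] ResV) := by rw [h]; trivial
        exact this
    have hinjf₀ : Function.Injective (f₀.hom.hom.hom : W →ₗ[ℂ] ResV) := by
      rw [← LinearMap.ker_eq_bot]
      exact hkerf₀
    have hS₀good : IsGood (LinearMap.range (f₀.hom.hom.hom : W →ₗ[ℂ] ResV)) := by
      refine ⟨hrinv, ?_, ?_⟩
      · set γlin : W →ₗ[ℂ] (LinearMap.range (f₀.hom.hom.hom : W →ₗ[ℂ] ResV)) :=
          (f₀.hom.hom.hom : W →ₗ[ℂ] ResV).rangeRestrict with hγlin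
        have hγcomm : ∀ (k : K) (y : W),
            γlin (W.ρ k y) = (subRep ResV.ρ _ hrinv) k (γlin y) := by
          intro k y
          apply Subtype.ext
          show f₀.hom (W.ρ k y) = ResV.ρ k (f₀.hom y)
          exact hom_comm_apply' f₀ k y
        set γ := mkHom (X := W) (Y := FDRep.of (subRep ResV.ρ _ hrinv)) γlin hγcomm with hγ
        have hbij : Function.Bijective (γ.hom.hom.hom : _ →ₗ[ℂ] _) := by
          constructor
          · intro a b hab
            apply hinjf₀
            exact congrArg Subtype.val hab
          · intro y
            obtain ⟨a, ha⟩ := y.2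
            exact ⟨a, Subtype.ext ha⟩
        exact Simple.of_iso (isoOfBijective γ hbij).symm
      · exact LinearMap.finrank_range_of_inj hinjf₀
    -- Z is G-invariant and nonzero, so Z = ⊤
    have hZinvG : IsInv V.ρ Z := by
      intro g x hx
      have h1 := habsorb _ (good_map g Z hZgood)
      have h2 : V.ρ g x ∈ Submodule.map (Φ g) Z := ⟨x, hx, rfl⟩

      have h3 : Submodule.map (Φ g) Z ≤ Z := by
        calc Submodule.map (Φ g) Z ≤ Submodule.map (Φ g) Z ⊔ Z := le_sup_left
        _ = Z := h1
      exact h3 h2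
    have hZne : Z ≠ ⊥ := by
      intro hb
      have h1 := habsorb _ (good_single _ hS₀good)
      have h2 : LinearMap.range (f₀.hom.hom.hom : W →ₗ[ℂ] ResV) ≤ Z := by
        calc LinearMap.range (f₀.hom.hom.hom : W →ₗ[ℂ] ResV)
            ≤ LinearMap.range (f₀.hom.hom.hom : W →ₗ[ℂ] ResV) ⊔ Z := le_sup_left
        _ = Z := h1
      rw [hb, le_bot_iff] at h2
      obtain ⟨y, hy⟩ := hom_ne_zero hf₀
      apply hy
      have h4 : f₀.hom y ∈ LinearMap.range (f₀.hom.hom.hom : W →ₗ[ℂ] ResV) := ⟨y, rfl⟩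
      rw [h2] at h4
      simpa using h4
    have hZtop : Z = ⊤ := by
      rcases invariants_of_simple V Z hZinvG with h | h
      · exact absurd h hZne
      · exact h
    obtain ⟨s, hs, hseq⟩ := hZgood
    exact L5 s hs S hS hS0 hSsimple (by rw [← hseq, hZtop]; exact le_top)
  -- divisibility by induction
  have C2 : ∀ (d : ℕ) (N : Submodule ℂ ResV), finrank ℂ N ≤ d → IsInv ResV.ρ N →
      finrank ℂ W ∣ finrank ℂ N := by
    intro d
    induction d with
    | zero =>
      intro N hN _
      have : finrank ℂ N = 0 := by omega
      rw [this]
      exact dvd_zero _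
    | succ d ih =>
      intro N hNle hNinv
      by_cases hbot : N = ⊥
      · rw [hbot, finrank_bot]
        exact dvd_zero _
      · obtain ⟨S, hS, hSle, hS0, hSsimp⟩ := exists_simple_sub ResV N hNinv hbot
        have hSdim : finrank ℂ S = finrank ℂ W := main S hS hS0 hSsimp
        obtain ⟨π, hπcomm, hπmem, hπfix⟩ := exists_equivariant_proj ResV.ρ S hS
        set N' : Submodule ℂ ResV := N ⊓ LinearMap.ker π with hN'
        have hN'inv : IsInv ResV.ρ N' := by
          intro k x hx
          obtain ⟨hx1, hx2⟩ := Submodule.mem_inf.mp hx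
          refine Submodule.mem_inf.mpr ⟨hNinv k x hx1, ?_⟩
          show π (ResV.ρ k x) = 0
          rw [hπcomm]
          have h0 : π x = 0 := hx2
          rw [h0, map_zero]
        have hsup : S ⊔ N' = N := by
          apply le_antisymm
          · exact sup_le hSle inf_le_left
          · intro x hx
            have hπx : π x ∈ S := hπmem x
            have h1 : x - π x ∈ N' := by
              refine Submodule.mem_inf.mpr ⟨Submodule.sub_mem N hx (hSle hπx), ?_⟩
              show π (x - π x) = 0
              rw [map_sub, hπfix _ hπx, sub_self]
            have h2 : π x + (x - π x) ∈ S ⊔ N' :=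
              Submodule.add_mem _ (Submodule.mem_sup_left hπx) (Submodule.mem_sup_right h1)
            rwa [show π x + (x - π x) = x by abel] at h2
        have hdisj : S ⊓ N' = ⊥ := by
          rw [eq_bot_iff]
          intro x hx
          have hx1 : x ∈ S := (Submodule.mem_inf.mp hx).1
          have hx3 : π x = 0 := (Submodule.mem_inf.mp (Submodule.mem_inf.mp hx).2).2
          have hfx : π x = x := hπfix x hx1
          show x ∈ (⊥ : Submodule ℂ ResV)
          rw [Submodule.mem_bot, ← hfx, hx3]
        have hadd : finrank ℂ S + finrank ℂ N' = finrank ℂ N := by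
          have := Submodule.finrank_sup_add_finrank_inf_eq S N'
          rw [hsup, hdisj, finrank_bot] at this
          omega
        have hN'le : finrank ℂ N' ≤ d := by omega
        have := ih N' hN'le hN'inv
        rw [← hadd, hSdim]
        exact dvd_add (dvd_refl _) this
  have hfin : finrank ℂ W ∣ finrank ℂ (⊤ : Submodule ℂ ResV) :=
    C2 (finrank ℂ (⊤ : Submodule ℂ ResV)) ⊤ le_rfl (fun k x _ => trivial)
  rw [finrank_top] at hfin
  exact hfin

def res (K : Subgroup G) (X : FDRep ℂ G) : FDRep ℂ K := FDRep.of (X.ρ.comp K.subtype)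

end Clifford

end DefectAux

open DefectAux

/-- If `K ⊴ G` has index prime to `p` and `K` has an irreducible character of
`p`-defect zero, then so does `G`. -/
theorem defect_stmt_3 (p : ℕ) (hp : p.Prime) (G : Type) [Group G] [Fintype G]
    (K : Subgroup G) [K.Normal] (hind : ¬ p ∣ K.index)
    (hK : ∃ W : FDRep ℂ K, CategoryTheory.Simple W ∧
      (Module.finrank ℂ W).factorization p = (Nat.card K).factorization p) :
    ∃ V : FDRep ℂ G, CategoryTheory.Simple V ∧
      (Module.finrank ℂ V).factorization p = (Nat.card G).factorization p := by
  classical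
  haveI : Fintype (K : Subgroup G) := Fintype.ofFinite _
  obtain ⟨W, hWs, hWdef⟩ := hK
  haveI := hWs
  set a : ℕ := (Nat.card (K : Subgroup G)).factorization p with ha
  -- numerics about cards
  have hKcard0 : Nat.card (K : Subgroup G) ≠ 0 := Nat.card_pos.ne'
  have hind0 : K.index ≠ 0 := Subgroup.index_ne_zero_of_finite
  have hWne : finrank ℂ W ≠ 0 := by
    haveI := nontrivial_of_simple W
    exact Module.finrank_pos.ne'
  have hcardG : (Nat.card G).factorization p = a := by
    rw [← Subgroup.card_mul_index K, Nat.factorization_mul hKcard0 hind0, Finsupp.add_apply,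
      Nat.factorization_eq_zero_of_not_dvd hind, ha, add_zero]
  have hKC : (Fintype.card (K : Subgroup G) : ℂ) ≠ 0 :=
    Nat.cast_ne_zero.mpr Fintype.card_ne_zero
  have hGC : (Fintype.card G : ℂ) ≠ 0 := Nat.cast_ne_zero.mpr Fintype.card_ne_zero
  -- decompose the regular representation
  obtain ⟨n, S, hSsimple, hSchar⟩ := character_decomp (regRep G)
  set m : Fin n → ℕ := fun i => finrank ℂ (W ⟶ res K (S i)) with hm_def
  -- multiplicity formulas
  have hm : ∀ i, ((m i : ℕ) : ℂ) * (Fintype.card (K : Subgroup G) : ℂ)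
      = ∑ k : (K : Subgroup G), (S i).character ↑k * W.character k⁻¹ :=
    fun i => finrank_hom_eq W (res K (S i))
  have hswap : (∑ i, ((m i : ℕ) : ℂ)) * (Fintype.card (K : Subgroup G) : ℂ)
      = ∑ k : (K : Subgroup G), (regRep G).character ↑k * W.character k⁻¹ := by
    rw [Finset.sum_mul, Finset.sum_congr rfl (fun i _ => hm i), Finset.sum_comm]
    apply Finset.sum_congr rfl
    intro k _
    rw [← Finset.sum_mul, ← hSchar (↑k : G)]
  have hsingle : ∑ k : (K : Subgroup G), (regRep G).character ↑k * W.character k⁻¹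
      = (Fintype.card G : ℂ) * (finrank ℂ W : ℂ) := by
    have h1 : ∀ k : (K : Subgroup G), (regRep G).character ↑k * W.character k⁻¹
        = if k = 1 then (Fintype.card G : ℂ) * (finrank ℂ W : ℂ) else 0 := by
      intro k
      rw [regRep_character]
      by_cases hk : k = 1
      · rw [if_pos hk, if_pos (by rw [hk]; exact OneMemClass.coe_one _), hk, inv_one,
          FDRep.char_one]
      · rw [if_neg hk, if_neg (fun c => hk (OneMemClass.coe_eq_one.mp c)), zero_mul]
    rw [Finset.sum_congr rfl (fun k _ => h1 k), Finset.sum_ite_eq' Finset.univ (1 : (K : Subgroup G))]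
    simp
  have hsumN : (∑ i, m i) * Fintype.card (K : Subgroup G) = Fintype.card G * finrank ℂ W := by
    have := hswap.trans hsingle
    exact_mod_cast this
  have hGKcard : Fintype.card G = K.index * Fintype.card (K : Subgroup G) := by
    rw [← Nat.card_eq_fintype_card, ← Nat.card_eq_fintype_card, ← Subgroup.index_mul_card K]
  have hsum : ∑ i, m i = K.index * finrank ℂ W := by
    have hKpos : 0 < Fintype.card (K : Subgroup G) := Fintype.card_pos
    apply Nat.eq_of_mul_eq_mul_right hKpos
    rw [hsumN, hGKcard]
    ring
  -- dimension equals multiplicity in the regular representation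
  have hreg1 : ∀ i, ((finrank ℂ (S i ⟶ regRep G) : ℕ) : ℂ)
      = (finrank ℂ (S i) : ℂ) := by
    intro i
    apply mul_right_cancel₀ hGC
    rw [finrank_hom_eq (S i) (regRep G)]
    have h1 : ∀ g : G, (regRep G).character g * (S i).character g⁻¹
        = if g = 1 then (finrank ℂ (S i) : ℂ) * (Fintype.card G : ℂ) else 0 := by
      intro g
      rw [regRep_character]
      by_cases hg : g = 1
      · rw [if_pos hg, if_pos hg, hg, inv_one, FDRep.char_one]; ring
      · rw [if_neg hg, if_neg hg, zero_mul]
    rw [Finset.sum_congr rfl (fun g _ => h1 g), Finset.sum_ite_eq' Finset.univ (1 : G)]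
    simp [mul_comm]
  have hreg2 : ∀ i, ((finrank ℂ (S i ⟶ regRep G) : ℕ) : ℂ)
      = ((∑ j, finrank ℂ (S i ⟶ S j) : ℕ) : ℂ) := by
    intro i
    apply mul_right_cancel₀ hGC
    rw [finrank_hom_eq (S i) (regRep G)]
    have h2 : ∀ g : G, (regRep G).character g * (S i).character g⁻¹
        = ∑ j, (S j).character g * (S i).character g⁻¹ := by
      intro g
      rw [hSchar g, Finset.sum_mul]
    rw [Finset.sum_congr rfl (fun g _ => h2 g), Finset.sum_comm]
    have h3 : ∀ j, ∑ g : G, (S j).character g * (S i).character g⁻¹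
        = ((finrank ℂ (S i ⟶ S j) : ℕ) : ℂ) * (Fintype.card G : ℂ) :=
      fun j => (finrank_hom_eq (S i) (S j)).symm
    rw [Finset.sum_congr rfl (fun j _ => h3 j), ← Finset.sum_mul]
    push_cast
    ring
  have hdim : ∀ i, (∑ j, finrank ℂ (S i ⟶ S j)) = finrank ℂ (S i) := by
    intro i
    have := (hreg2 i).symm.trans (hreg1 i)
    exact_mod_cast this
  -- m is constant on isomorphism classes
  have hm_iso : ∀ i j, Nonempty (S i ≅ S j) → m i = m j := by
    rintro i j ⟨e⟩
    have h1 := hm i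
    have h2 := hm j
    have hchar : (S i).character = (S j).character := FDRep.char_iso e
    rw [hchar] at h1
    have h3 := h1.trans h2.symm
    exact_mod_cast mul_right_cancel₀ hKC h3
  -- suppose no simple G-rep has the right p-part
  by_contra hno
  push_neg at hno
  have hbig : ∀ i, m i ≠ 0 → p ^ (a + 1) ∣ finrank ℂ (S i) := by
    intro i hmi
    haveI := hSsimple i
    have hf : ∃ f : W ⟶ res K (S i), f ≠ 0 := by
      by_contra hco
      push_neg at hco
      have hss : Subsingleton (W ⟶ res K (S i)) := ⟨fun x y => by rw [hco x, hco y]⟩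
      exact hmi (Module.finrank_zero_iff.mpr hss)
    obtain ⟨f, hf0⟩ := hf
    have hdvdW : finrank ℂ W ∣ finrank ℂ (S i) := clifford W (S i) f hf0
    have hpa : p ^ a ∣ finrank ℂ (S i) := by
      refine dvd_trans ?_ hdvdW
      rw [← hWdef]
      exact Nat.ordProj_dvd _ p
    have hpos : finrank ℂ (S i) ≠ 0 := by
      haveI := nontrivial_of_simple (S i)
      exact Module.finrank_pos.ne'
    by_contra hnd
    apply hno (S i) (hSsimple i)
    have hle : a ≤ (finrank ℂ (S i)).factorization p :=
      (hp.pow_dvd_iff_le_factorization hpos).mp hpa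
    have hlt : ¬ (a + 1 ≤ (finrank ℂ (S i)).factorization p) := by
      intro hcon
      exact hnd ((hp.pow_dvd_iff_le_factorization hpos).mpr hcon)
    have h1 : (finrank ℂ (S i)).factorization p = a := by omega
    rw [h1, hcardG]
  -- partition by isomorphism classes
  letI r : Setoid (Fin n) := ⟨fun i j => Nonempty (S i ≅ S j),
    ⟨fun i => ⟨Iso.refl _⟩, fun ⟨e⟩ => ⟨e.symm⟩, fun ⟨e⟩ ⟨f⟩ => ⟨e.trans f⟩⟩⟩
  have hpart : ∑ q ∈ Finset.univ.image (Quotient.mk r),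
      ∑ i ∈ Finset.univ.filter (fun i => Quotient.mk r i = q), m i = ∑ i, m i := by
    rw [Finset.sum_fiberwise_eq_sum_filter]
    congr 1
    apply Finset.filter_true_of_mem
    intro i _
    exact Finset.mem_image_of_mem _ (Finset.mem_univ i)
  have hdvd : ∀ q ∈ Finset.univ.image (Quotient.mk r),
      p ^ (a + 1) ∣ ∑ i ∈ Finset.univ.filter (fun i => Quotient.mk r i = q), m i := by
    intro q hq
    obtain ⟨i₀, _, rfl⟩ := Finset.mem_image.mp hq
    have hconst : ∀ i ∈ Finset.univ.filter (fun i => Quotient.mk r i = Quotient.mk r i₀),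
        m i = m i₀ := by
      intro i hi
      have hiso : Nonempty (S i ≅ S i₀) := Quotient.exact (Finset.mem_filter.mp hi).2
      exact hm_iso i i₀ hiso
    rw [Finset.sum_congr rfl hconst, Finset.sum_const, smul_eq_mul]
    by_cases h0 : m i₀ = 0
    · simp [h0]
    · have hfib : (Finset.univ.filter (fun i => Quotient.mk r i = Quotient.mk r i₀)).card
          = finrank ℂ (S i₀) := by
        rw [Finset.card_filter, ← hdim i₀]
        apply Finset.sum_congr rfl
        intro j _
        haveI := hSsimple i₀
        haveI := hSsimple j
        rw [FDRep.finrank_hom_simple_simple (S i₀) (S j)]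
        by_cases hij : Nonempty (S i₀ ≅ S j)
        · rw [if_pos (Quotient.sound (⟨hij.some.symm⟩ : Nonempty (S j ≅ S i₀))), if_pos hij]
        · rw [if_neg (fun c => hij ⟨((Quotient.exact c : Nonempty (S j ≅ S i₀))).some.symm⟩), if_neg hij]
      rw [hfib]
      exact Dvd.dvd.mul_right (hbig i₀ h0) _
  have hfinal : p ^ (a + 1) ∣ K.index * finrank ℂ W := by
    rw [← hsum, ← hpart]
    exact Finset.dvd_sum hdvd
  have hne : K.index * finrank ℂ W ≠ 0 := mul_ne_zero hind0 hWne
  have hle := (hp.pow_dvd_iff_le_factorization hne).mp hfinal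
  rw [Nat.factorization_mul hind0 hWne, Finsupp.add_apply,
    Nat.factorization_eq_zero_of_not_dvd hind, hWdef, zero_add] at hle
  omega
end
end

section
/- Let G be a finite group, N a normal p'-subgroup of G, and R a non-trivial p-subgroup of G. Then N_{G/N}(RN/N) = N_G(R)N/N, and this quotient is isomorphic to N_G(R)/N_N(R). -/
open Subgroup QuotientGroup Pointwise

private lemma conj_smul_eq_iff_mem_normalizer' {G : Type*} [Group G] {H : Subgroup G} {g : G} :
    MulAut.conj g • H = H ↔ g ∈ (Subgroup.normalizer (H : Set G)) := by
  constructor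
  · intro h
    rw [Subgroup.mem_normalizer_iff'']
    intro x
    conv_lhs => rw [← h]
    rw [Subgroup.mem_pointwise_smul_iff_inv_smul_mem]
    simp [MulAut.smul_def, mul_assoc]
  · intro h
    ext x
    rw [Subgroup.mem_pointwise_smul_iff_inv_smul_mem]
    simp only [MulAut.smul_def, map_inv, MulAut.conj_inv_apply]
    exact (Subgroup.mem_normalizer_iff''.mp h x).symm

/-- For a normal `p'`-subgroup `N` of the finite group `G` and a non-trivial
`p`-subgroup `R`, one has `N_{G/N}(RN/N) = N_G(R)N/N ≅ N_G(R)/N_N(R)`. -/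
theorem defect_stmt_14 (p : ℕ) (hp : p.Prime) (G : Type*) [Group G] [Finite G]
    (N : Subgroup G) [N.Normal] (hN : (Nat.card N).Coprime p)
    (R : Subgroup G) (hR : IsPGroup p R) (hRbot : R ≠ ⊥) :
    Subgroup.normalizer (Subgroup.map (QuotientGroup.mk' N) R : Set (G ⧸ N))
        = Subgroup.map (QuotientGroup.mk' N) (Subgroup.normalizer (R : Set G)) ∧
      Nonempty ((Subgroup.map (QuotientGroup.mk' N) (Subgroup.normalizer (R : Set G))) ≃*
        ((Subgroup.normalizer (R : Set G)) ⧸ (N.subgroupOf (Subgroup.normalizer (R : Set G))))) := by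
  haveI : Fact p.Prime := ⟨hp⟩
  have hsurj := QuotientGroup.mk'_surjective N
  have hNp : ¬ p ∣ Nat.card N := by
    intro h
    exact hp.ne_one (Nat.eq_one_of_dvd_one (hN ▸ Nat.dvd_gcd h dvd_rfl))
  have hinf : R ⊓ N = ⊥ := by
    have h1 : IsPGroup p ↥(R ⊓ N) := hR.to_inf_left
    obtain ⟨n, hn⟩ := IsPGroup.iff_card.mp h1
    have hd : Nat.card (R ⊓ N : Subgroup G) ∣ Nat.card N := Subgroup.card_dvd_of_le inf_le_right
    rcases Nat.eq_zero_or_pos n with rfl | hnpos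
    · exact Subgroup.card_eq_one.mp (by simpa using hn)
    · exact absurd (dvd_trans (hn ▸ dvd_pow_self p hnpos.ne') hd) hNp
  set K := R ⊔ N with hKdef
  have hRK : R ≤ K := le_sup_left
  have hNK : N ≤ K := le_sup_right
  have hcardK : Nat.card K = Nat.card R * Nat.card N := by
    have e1 := Subgroup.card_eq_card_quotient_mul_card_subgroup (N.subgroupOf K)
    have hb : N.subgroupOf R = ⊥ := by
      rw [Subgroup.eq_bot_iff_forall]
      intro x hx
      have : (x : G) ∈ R ⊓ N := ⟨x.2, hx⟩
      rw [hinf] at this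
      exact Subtype.ext this
    have e2 : Nat.card (↥K ⧸ N.subgroupOf K) = Nat.card R := by
      rw [← Nat.card_congr (QuotientGroup.quotientInfEquivProdNormalQuotient R N).toEquiv, hb]
      exact Nat.card_congr QuotientGroup.quotientBot.toEquiv
    have e3 : Nat.card (N.subgroupOf K) = Nat.card N :=
      Nat.card_congr (Subgroup.subgroupOfEquivOfLe hNK).toEquiv
    rw [e1, e2, e3]
  have hRpos : 0 < Nat.card R := Nat.card_pos
  -- Any p-subgroup of K of the same cardinality as R gives a Sylow subgroup of K
  have mk_syl : ∀ X : Subgroup G, X ≤ K → Nat.card X = Nat.card R → IsPGroup p X →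
      ∃ S : Sylow p K, (S : Subgroup ↥K) = X.subgroupOf K := by
    intro X hXK hcard hX
    have h1 : IsPGroup p (X.subgroupOf K) := hX.comap_subtype
    have hcX : Nat.card (X.subgroupOf K) = Nat.card R := by
      rw [← hcard]
      exact Nat.card_congr (Subgroup.subgroupOfEquivOfLe hXK).toEquiv
    have hidx : ¬ p ∣ (X.subgroupOf K).index := by
      have h2 := Subgroup.index_mul_card (X.subgroupOf K)
      rw [hcX, hcardK] at h2
      have h3 : (X.subgroupOf K).index = Nat.card N :=
        Nat.eq_of_mul_eq_mul_right hRpos (h2.trans (mul_comm _ _))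
      rw [h3]; exact hNp
    exact ⟨h1.toSylow hidx, rfl⟩
  -- Frattini argument
  have frattini : (Subgroup.normalizer (K : Set G)) ≤ (Subgroup.normalizer (R : Set G)) ⊔ N := by
    intro g hg
    have hgK : MulAut.conj g⁻¹ • K = K := by
      rw [conj_smul_eq_iff_mem_normalizer']
      exact inv_mem hg
    set X : Subgroup G := MulAut.conj g⁻¹ • R with hXdef
    have hXK : X ≤ K := by
      calc X ≤ MulAut.conj g⁻¹ • K :=
              Subgroup.pointwise_smul_le_pointwise_smul_iff.mpr hRK
        _ = K := hgK
    have hXcard : Nat.card X = Nat.card R :=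
      (Nat.card_congr (Subgroup.equivSMul (MulAut.conj g⁻¹) R).toEquiv).symm
    have hXp : IsPGroup p X := by
      rw [hXdef, Subgroup.pointwise_smul_def]
      exact hR.map _
    obtain ⟨Q, hQ⟩ := mk_syl X hXK hXcard hXp
    obtain ⟨S, hS⟩ := mk_syl R hRK rfl hR
    obtain ⟨k, hk⟩ := MulAction.exists_smul_eq ↥K Q S
    -- push down to G
    have hcomp : K.subtype.comp ((MulDistribMulAction.toMonoidEnd (MulAut ↥K) ↥K)
          (MulAut.conj k))
        = ((MulDistribMulAction.toMonoidEnd (MulAut G) G)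
            (MulAut.conj (k : G))).comp K.subtype := by
      ext x; simp
    have hmap : MulAut.conj (k : G) • X = R := by
      have h1 : Subgroup.map K.subtype ((k • Q : Sylow p ↥K) : Subgroup ↥K)
          = Subgroup.map K.subtype (S : Subgroup ↥K) := by rw [hk]
      erw [Sylow.coe_subgroup_smul, hQ, hS, Subgroup.pointwise_smul_def,
        Subgroup.map_map, hcomp, ← Subgroup.map_map, subgroupOf_map_subtype,
        subgroupOf_map_subtype, inf_of_le_left hXK, inf_of_le_left hRK,
        ← Subgroup.pointwise_smul_def] at h1
      exact h1
    have hnorm : (k : G) * g⁻¹ ∈ (Subgroup.normalizer (R : Set G)) := by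
      rw [← conj_smul_eq_iff_mem_normalizer', map_mul, mul_smul]
      exact hmap
    have hgeq : g = ((k : G) * g⁻¹)⁻¹ * (k : G) := by group
    rw [hgeq]
    exact mul_mem ((le_sup_left : (Subgroup.normalizer (R : Set G)) ≤ (Subgroup.normalizer (R : Set G)) ⊔ N) (inv_mem hnorm))
      ((sup_le_sup_right Subgroup.le_normalizer N : K ≤ (Subgroup.normalizer (R : Set G)) ⊔ N) k.2)
  have key : (Subgroup.normalizer (K : Set G)) = (Subgroup.normalizer (R : Set G)) ⊔ N := by
    refine le_antisymm frattini (sup_le ?_ (hNK.trans Subgroup.le_normalizer))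
    intro x hx
    rw [← conj_smul_eq_iff_mem_normalizer', hKdef, smul_sup,
      conj_smul_eq_iff_mem_normalizer'.mpr hx, conj_smul_eq_iff_mem_normalizer'.mpr
        (by rw [Subgroup.normalizer_eq_top_iff.mpr inferInstance]; exact Subgroup.mem_top x)]
  constructor
  · have hc : Subgroup.comap (QuotientGroup.mk' N)
        ((Subgroup.normalizer ((Subgroup.map (QuotientGroup.mk' N) R) : Set (G ⧸ N)))) = (Subgroup.normalizer (K : Set G)) := by
      rw [Subgroup.comap_normalizer_eq_of_surjective _ hsurj, Subgroup.comap_map_eq,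
        QuotientGroup.ker_mk']
    calc (Subgroup.normalizer ((Subgroup.map (QuotientGroup.mk' N) R) : Set (G ⧸ N)))
        = Subgroup.map (QuotientGroup.mk' N) (Subgroup.comap (QuotientGroup.mk' N)
            ((Subgroup.normalizer ((Subgroup.map (QuotientGroup.mk' N) R) : Set (G ⧸ N))))) :=
          (Subgroup.map_comap_eq_self_of_surjective hsurj _).symm
      _ = Subgroup.map (QuotientGroup.mk' N) ((Subgroup.normalizer (R : Set G)) ⊔ N) := by rw [hc, key]
      _ = Subgroup.map (QuotientGroup.mk' N) (Subgroup.normalizer (R : Set G)) := by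
          have hmapN : Subgroup.map (QuotientGroup.mk' N) N = ⊥ := by
            rw [Subgroup.map_eq_bot_iff, QuotientGroup.ker_mk']
          rw [Subgroup.map_sup, hmapN, sup_bot_eq]
  · set H := (Subgroup.normalizer (R : Set G)) with hH
    let f := (QuotientGroup.mk' N).comp H.subtype
    have hrange : f.range = Subgroup.map (QuotientGroup.mk' N) H := by
      rw [MonoidHom.range_comp, Subgroup.range_subtype]
    have hker : f.ker = N.subgroupOf H := by
      ext x
      simp [f, MonoidHom.mem_ker, QuotientGroup.eq_one_iff, Subgroup.mem_subgroupOf]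
    haveI : (N.subgroupOf H).Normal := hker ▸ f.normal_ker
    exact ⟨(MulEquiv.subgroupCongr hrange.symm).trans
      ((QuotientGroup.quotientKerEquivRange f).symm.trans
        (QuotientGroup.quotientMulEquivOfEq hker))⟩
end
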